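/- arXiv:1008.2166 — 4 statements merged into one kernel-verified Lean document; each statement's English description precedes it below -/
import Mathlib

section
/- Let h ∈ R be a squarefree polynomial. Then d(h) = 0 if and only if there exists a squarefree polynomial H ∈ R with d(H) = h. -/
open MvPolynomial

/-- The differential operator `d = Σ_{v∈V} ∂/∂X_v` on
`MvPolynomial ((Z/2)^n) (ZMod 2)`. -/
noncomputable def dOp (n : ℕ) :
    MvPolynomial (Fin n → ZMod 2) (ZMod 2) →ₗ[ZMod 2]
      MvPolynomial (Fin n → ZMod 2) (ZMod 2) :=
  ∑ v : Fin n → ZMod 2, (pderiv v).toLinearMap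

/-- A polynomial is squarefree if every monomial in its support has all exponents `≤ 1`
and does not involve the variable indexed by the zero vector. -/
def IsSqFree (n : ℕ) (p : MvPolynomial (Fin n → ZMod 2) (ZMod 2)) : Prop :=
  ∀ m ∈ p.support, (∀ v : Fin n → ZMod 2, m v ≤ 1) ∧ m 0 = 0

theorem dOp_monomial (n : ℕ) (m : (Fin n → ZMod 2) →₀ ℕ) (c : ZMod 2) :
    dOp n (monomial m c) =
      ∑ v : Fin n → ZMod 2, monomial (m - Finsupp.single v 1) (c * (m v : ZMod 2)) := by
  simp [dOp, pderiv_monomial]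

theorem pderiv_pderiv_self (n : ℕ) (v : Fin n → ZMod 2)
    (p : MvPolynomial (Fin n → ZMod 2) (ZMod 2)) :
    pderiv v (pderiv v p) = 0 := by
  induction p using MvPolynomial.induction_on' with
  | monomial m c =>
    simp only [pderiv_monomial, Finsupp.tsub_apply, Finsupp.single_eq_same]
    have h2 : c * ((m v : ℕ) : ZMod 2) * (((m v - 1 : ℕ)) : ZMod 2) = 0 := by
      have h3 : ((m v * (m v - 1) : ℕ) : ZMod 2) = 0 := by
        rw [ZMod.natCast_eq_zero_iff]
        rcases Nat.even_or_odd (m v) with he | ho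
        · exact Dvd.dvd.mul_right he.two_dvd _
        · obtain ⟨k, hk⟩ := ho
          exact Dvd.dvd.mul_left (by omega : (2:ℕ) ∣ (m v - 1)) _
      push_cast at h3
      rw [mul_assoc, h3, mul_zero]
    rw [h2, map_zero]
  | add p q hp hq => rw [map_add, map_add, hp, hq, add_zero]

theorem pderiv_comm' (n : ℕ) (v w : Fin n → ZMod 2)
    (p : MvPolynomial (Fin n → ZMod 2) (ZMod 2)) :
    pderiv v (pderiv w p) = pderiv w (pderiv v p) := by
  induction p using MvPolynomial.induction_on' with
  | monomial m c =>
    by_cases hvw : v = w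
    · subst hvw; rfl
    · simp only [pderiv_monomial, Finsupp.tsub_apply]
      rw [Finsupp.single_eq_of_ne' (Ne.symm hvw), Finsupp.single_eq_of_ne' hvw]
      rw [tsub_right_comm]
      simp only [Nat.sub_zero]
      ring_nf
  | add p q hp hq => simp [map_add, hp, hq]

theorem dOp_dOp (n : ℕ) (p : MvPolynomial (Fin n → ZMod 2) (ZMod 2)) :
    dOp n (dOp n p) = 0 := by
  have : dOp n (dOp n p) =
      ∑ a : (Fin n → ZMod 2) × (Fin n → ZMod 2), pderiv a.1 (pderiv a.2 p) := by
    simp only [dOp, LinearMap.sum_apply, map_sum, Fintype.sum_prod_type]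
    exact Finset.sum_congr rfl fun x _ => Finset.sum_congr rfl fun y _ =>
      pderiv_comm' n y x p
  rw [this]
  apply Finset.sum_ninvolution (fun a => (a.2, a.1))
  · intro a
    rw [pderiv_comm' n a.1 a.2, ← two_smul (ZMod 2), show (2 : ZMod 2) = 0 from rfl,
      zero_smul]
  · rintro ⟨v, w⟩ ha hc
    simp only [Prod.mk.injEq] at hc
    obtain ⟨h1, -⟩ := hc
    subst h1
    exact ha (pderiv_pderiv_self n _ p)
  · intro a; exact Finset.mem_univ _
  · intro a; rfl
noncomputable def sMap (n : ℕ) (v0 : Fin n → ZMod 2) :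
    MvPolynomial (Fin n → ZMod 2) (ZMod 2) →ₗ[ZMod 2]
      MvPolynomial (Fin n → ZMod 2) (ZMod 2) :=
  Finsupp.lsum (ZMod 2) (fun m => if m v0 = 0 then monomial (m + Finsupp.single v0 1) else 0) ∘ₗ
    (AddMonoidAlgebra.coeffLinearEquiv (ZMod 2)).toLinearMap

theorem sMap_monomial (n : ℕ) (v0 : Fin n → ZMod 2) (m : (Fin n → ZMod 2) →₀ ℕ) (c : ZMod 2) :
    sMap n v0 (monomial m c) =
      if m v0 = 0 then monomial (m + Finsupp.single v0 1) c else 0 := by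
  have h1 := Finsupp.lsum_single (R := ZMod 2) (S := ZMod 2)
    (f := fun m : (Fin n → ZMod 2) →₀ ℕ =>
      if m v0 = 0 then (monomial (m + Finsupp.single v0 1) :
        ZMod 2 →ₗ[ZMod 2] MvPolynomial (Fin n → ZMod 2) (ZMod 2)) else 0) m c
  rw [sMap, LinearMap.comp_apply]
  erw [h1]
  split <;> simp

theorem homotopy (n : ℕ) (v0 : Fin n → ZMod 2) (m : (Fin n → ZMod 2) →₀ ℕ) (c : ZMod 2)
    (hm : m v0 ≤ 1) :
    dOp n (sMap n v0 (monomial m c)) =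
      monomial m c + sMap n v0 (dOp n (monomial m c)) := by
  by_cases h0 : m v0 = 0
  · have hrhs : sMap n v0 (dOp n (monomial m c))
        = ∑ v : Fin n → ZMod 2,
            monomial (m - Finsupp.single v 1 + Finsupp.single v0 1) (c * ((m v : ℕ) : ZMod 2)) := by
      rw [dOp_monomial, map_sum]
      refine Finset.sum_congr rfl fun v _ => ?_
      rw [sMap_monomial, if_pos]
      rw [Finsupp.tsub_apply]
      simp [h0]
    rw [sMap_monomial, if_pos h0, dOp_monomial, hrhs,
      Finset.sum_eq_sum_sdiff_singleton_add (Finset.mem_univ v0),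
      Finset.sum_eq_sum_sdiff_singleton_add (Finset.mem_univ v0)
        (fun v => monomial (m - Finsupp.single v 1 + Finsupp.single v0 1) (c * ((m v : ℕ) : ZMod 2)))]
    have hf : (monomial (m + Finsupp.single v0 1 - Finsupp.single v0 1)
        (c * (((m + Finsupp.single v0 1 : (Fin n → ZMod 2) →₀ ℕ) v0 : ℕ) : ZMod 2)) :
        MvPolynomial (Fin n → ZMod 2) (ZMod 2)) = monomial m c := by
      rw [add_tsub_cancel_right]
      congr 1
      rw [Finsupp.add_apply, Finsupp.single_eq_same, h0]
      simp
    have hg : c * ((m v0 : ℕ) : ZMod 2) = 0 := by rw [h0]; simp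
    rw [hf, hg]
    have hS : ∑ v ∈ Finset.univ \ {v0},
        (monomial (m + Finsupp.single v0 1 - Finsupp.single v 1)
          (c * (((m + Finsupp.single v0 1 : (Fin n → ZMod 2) →₀ ℕ) v : ℕ) : ZMod 2)) :
          MvPolynomial (Fin n → ZMod 2) (ZMod 2))
        = ∑ v ∈ Finset.univ \ {v0},
            monomial (m - Finsupp.single v 1 + Finsupp.single v0 1) (c * ((m v : ℕ) : ZMod 2)) := by
      refine Finset.sum_congr rfl fun v hv => ?_
      rw [Finset.mem_sdiff, Finset.mem_singleton] at hv
      have hv' : v ≠ v0 := hv.2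
      have harg : m + Finsupp.single v0 1 - Finsupp.single v 1
          = m - Finsupp.single v 1 + Finsupp.single v0 1 := by
        ext w
        simp only [Finsupp.tsub_apply, Finsupp.add_apply, Finsupp.single_apply]
        split_ifs <;> first | simp_all | omega
      have hco : ((m + Finsupp.single v0 1 : (Fin n → ZMod 2) →₀ ℕ) v : ℕ) = m v := by
        rw [Finsupp.add_apply, Finsupp.single_eq_of_ne' (Ne.symm hv'), add_zero]
      rw [harg, hco]
    rw [hS]
    simp [add_comm]
  · have h1 : m v0 = 1 := by omega
    rw [sMap_monomial, if_neg h0, map_zero, dOp_monomial, map_sum]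
    have hsum : ∀ v : Fin n → ZMod 2,
        sMap n v0 (monomial (m - Finsupp.single v 1) (c * ((m v : ℕ) : ZMod 2)))
        = if v = v0 then monomial m c else 0 := by
      intro v
      rw [sMap_monomial]
      rcases eq_or_ne v v0 with rfl | hv
      · have harg : m - Finsupp.single v 1 + Finsupp.single v 1 = m := by
          ext w
          simp only [Finsupp.tsub_apply, Finsupp.add_apply, Finsupp.single_apply]
          split_ifs with hw
          · subst hw; omega
          · omega
        rw [if_pos, if_pos rfl, harg, h1]
        · simp
        · rw [Finsupp.tsub_apply, Finsupp.single_eq_same, h1]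
      · rw [if_neg, if_neg hv]
        rw [Finsupp.tsub_apply, Finsupp.single_eq_of_ne' hv, h1]
        simp
    calc (0 : MvPolynomial (Fin n → ZMod 2) (ZMod 2))
        = monomial m c + monomial m c := by
          rw [← map_add]
          have : c + c = 0 := by rw [← two_mul, show (2 : ZMod 2) = 0 from rfl, zero_mul]
          rw [this, map_zero]
      _ = monomial m c + ∑ v : Fin n → ZMod 2,
            sMap n v0 (monomial (m - Finsupp.single v 1) (c * ((m v : ℕ) : ZMod 2))) := by
          congr 1
          rw [Finset.sum_congr rfl fun v _ => hsum v, Finset.sum_ite_eq' Finset.univ v0]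
          simp

/-- A squarefree polynomial `h` satisfies `d h = 0` iff it is `d` of a squarefree
polynomial. -/
theorem sqfree_dOp_eq_zero_iff (n : ℕ) (hn : 1 ≤ n)
    (h : MvPolynomial (Fin n → ZMod 2) (ZMod 2)) (hsf : IsSqFree n h) :
    dOp n h = 0 ↔
      ∃ H : MvPolynomial (Fin n → ZMod 2) (ZMod 2), IsSqFree n H ∧ dOp n H = h := by
  constructor
  · intro hd
    set v0 : Fin n → ZMod 2 := fun _ => 1 with hv0def
    have hv0 : v0 ≠ 0 := by
      intro hc
      have := congrFun hc ⟨0, hn⟩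
      simp [hv0def] at this
    refine ⟨sMap n v0 h, ?_, ?_⟩
    · -- squarefree
      intro m' hm'
      have hrep : sMap n v0 h = ∑ m ∈ h.support,
          (if m v0 = 0 then
            (monomial (m + Finsupp.single v0 1) (coeff m h) :
              MvPolynomial (Fin n → ZMod 2) (ZMod 2)) else 0) := by
        conv_lhs => rw [as_sum h]
        rw [map_sum]
        exact Finset.sum_congr rfl fun m _ => sMap_monomial n v0 m (coeff m h)
      rw [hrep] at hm'
      have := MvPolynomial.support_sum hm'
      rw [Finset.mem_biUnion] at this
      obtain ⟨m, hms, hm'm⟩ := this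
      by_cases h0 : m v0 = 0
      · rw [if_pos h0] at hm'm
        have hsub := MvPolynomial.support_monomial (s := m + Finsupp.single v0 1)
          (a := coeff m h) (h := Classical.dec _)
        rw [hsub] at hm'm
        have hm'eq : m' = m + Finsupp.single v0 1 := by
          by_cases hc : coeff m h = 0
          · rw [if_pos hc] at hm'm; exact absurd hm'm (Finset.notMem_empty _)
          · rw [if_neg hc] at hm'm; exact Finset.mem_singleton.mp hm'm
        obtain ⟨hle, hzero⟩ := hsf m hms
        subst hm'eq
        constructor
        · intro v
          rw [Finsupp.add_apply, Finsupp.single_apply]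
          by_cases hv : v0 = v
          · subst hv; simp [h0]
          · simp [hv, hle v]
        · rw [Finsupp.add_apply, Finsupp.single_apply, if_neg hv0, hzero, add_zero]
      · rw [if_neg h0] at hm'm
        simp at hm'm
    · -- dOp (sMap h) = h
      have key : dOp n (sMap n v0 h) = h + sMap n v0 (dOp n h) := by
        calc dOp n (sMap n v0 h)
            = ∑ m ∈ h.support, dOp n (sMap n v0 (monomial m (coeff m h))) := by
              rw [← map_sum, ← map_sum, ← as_sum]
          _ = ∑ m ∈ h.support, (monomial m (coeff m h)
                + sMap n v0 (dOp n (monomial m (coeff m h)))) :=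
              Finset.sum_congr rfl fun m hm => homotopy n v0 m _ ((hsf m hm).1 v0)
          _ = (∑ m ∈ h.support, monomial m (coeff m h))
                + ∑ m ∈ h.support, sMap n v0 (dOp n (monomial m (coeff m h))) :=
              Finset.sum_add_distrib
          _ = h + sMap n v0 (dOp n h) := by
              congr 1
              · exact (as_sum h).symm
              · rw [← map_sum, ← map_sum, ← as_sum]
      rw [key, hd, map_zero, add_zero]
  · rintro ⟨H, -, rfl⟩
    exact dOp_dOp n H
end

section
/- The Z/2-linear map Ψ : L_n → V_n* given by Ψ(H) = d(H) is well defined and surjective; in particular, for every p ∈ V_n* there exists H ∈ L_n with d(H) = p. -/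
open MvPolynomial

/-- Membership in `V_n*`: `d p = 0` and every monomial of `p` has the form
`X_{v_1} ⋯ X_{v_n}` where `(v_1, …, v_n)` is a basis of `V = (Z/2)^n`. -/
def MemVstar (n : ℕ) (p : MvPolynomial (Fin n → ZMod 2) (ZMod 2)) : Prop :=
  dOp n p = 0 ∧
    ∀ m ∈ p.support, ∃ b : Module.Basis (Fin n) (ZMod 2) (Fin n → ZMod 2),
      m = ∑ j : Fin n, Finsupp.single (b j) 1

/-- Membership in `L_n`: squarefree homogeneous of degree `n+1`, `d H ∈ V_n*`, and the
`n+1` variables of each monomial span `V`. -/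
def MemL (n : ℕ) (H : MvPolynomial (Fin n → ZMod 2) (ZMod 2)) : Prop :=
  IsSqFree n H ∧ H.IsHomogeneous (n + 1) ∧ MemVstar n (dOp n H) ∧
    ∀ m ∈ H.support,
      Submodule.span (ZMod 2) (↑m.support : Set (Fin n → ZMod 2)) = ⊤

section Aux

private lemma pderiv_comm'_s6 {σ R : Type*} [CommRing R] [DecidableEq σ] (i j : σ)
    (p : MvPolynomial σ R) :
    pderiv i (pderiv j p) = pderiv j (pderiv i p) := by
  induction p using MvPolynomial.induction_on' with
  | add p q hp hq => simp [map_add, hp, hq]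
  | monomial s a =>
      by_cases h : i = j
      · subst h; rfl
      · simp only [pderiv_monomial]
        have e1 : (s - Finsupp.single j 1 : σ →₀ ℕ) i = s i := by
          simp [Finsupp.tsub_apply, Finsupp.single_apply, Ne.symm h]
        have e2 : (s - Finsupp.single i 1 : σ →₀ ℕ) j = s j := by
          simp [Finsupp.tsub_apply, Finsupp.single_apply, h]
        have e3 : s - Finsupp.single j 1 - Finsupp.single i 1
            = s - Finsupp.single i 1 - Finsupp.single j 1 := by
          ext v; simp [Finsupp.tsub_apply]; omega
        rw [e1, e2, e3]; ring_nf

variable {n : ℕ}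

local notation "V" => (Fin n → ZMod 2)
local notation "R" => MvPolynomial (Fin n → ZMod 2) (ZMod 2)

lemma dOp_apply (p : R) : dOp n p = ∑ v : V, pderiv v p := by
  simp [dOp, LinearMap.sum_apply]

lemma two_eq_zero' : (2 : R) = 0 := by
  have := CharP.cast_eq_zero R 2
  exact_mod_cast this

lemma add_self' (p : R) : p + p = 0 := by
  have : p + p = 2 * p := by ring
  rw [this, two_eq_zero', zero_mul]

lemma dOp_X_mul (u : V) (p : R) : dOp n (X u * p) = p + X u * dOp n p := by
  simp only [dOp_apply]
  have : ∀ v : V, pderiv v (X u * p) = (pderiv v (X u)) * p + X u * pderiv v p := by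
    intro v; rw [pderiv_mul]
  rw [Finset.sum_congr rfl fun v _ => this v, Finset.sum_add_distrib, ← Finset.sum_mul,
    ← Finset.mul_sum]
  congr 1
  have : (∑ v : V, pderiv v (X u : R)) = 1 := by
    simp [pderiv_X, Pi.single_apply]
  rw [this, one_mul]

lemma dOp_Xsq_mul (u : V) (p : R) : dOp n (X u ^ 2 * p) = X u ^ 2 * dOp n p := by
  simp only [dOp_apply]
  have : ∀ v : V, pderiv v ((X u : R) ^ 2 * p) = X u ^ 2 * pderiv v p := by
    intro v
    rw [pderiv_mul, pderiv_pow]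
    have h2 : ((2 : ℕ) : R) = 0 := by exact_mod_cast two_eq_zero'
    rw [h2, zero_mul, zero_mul, zero_mul, zero_add]
  rw [Finset.sum_congr rfl fun v _ => this v, Finset.mul_sum]

lemma dOp_pderiv (u : V) (p : R) : dOp n (pderiv u p) = pderiv u (dOp n p) := by
  simp only [dOp_apply, map_sum]
  exact Finset.sum_congr rfl fun v _ => pderiv_comm'_s6 v u p

/-- The explicit preimage. -/
noncomputable def Hgood (p : R) : R :=
  ∑ m ∈ p.support, ∑ u ∈ Finset.univ.erase (0 : V) \ m.support,
    X u * monomial m (coeff m p)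

lemma X_mul_monomial' (u : V) (m : (Fin n → ZMod 2) →₀ ℕ) (c : ZMod 2) :
    (X u : R) * monomial m c = monomial (Finsupp.single u 1 + m) c := by
  rw [X, monomial_mul, one_mul]

lemma Xsq_mul_pderiv_monomial (u : V) (m : (Fin n → ZMod 2) →₀ ℕ) (c : ZMod 2)
    (hm : m u ≤ 1) :
    (X u : R) ^ 2 * pderiv u (monomial m c)
      = if u ∈ m.support then X u * monomial m c else 0 := by
  rw [pderiv_monomial]
  by_cases h : u ∈ m.support
  · have h1 : m u = 1 := le_antisymm hm (Nat.one_le_iff_ne_zero.mpr (Finsupp.mem_support_iff.mp h))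
    rw [if_pos h, X_pow_eq_monomial, monomial_mul, X_mul_monomial']
    have : Finsupp.single u 2 + (m - Finsupp.single u 1) = Finsupp.single u 1 + m := by
      ext v
      by_cases hv : v = u
      · subst hv; simp [Finsupp.single_apply, Finsupp.tsub_apply, h1]
      · simp [Finsupp.single_apply, Finsupp.tsub_apply, Ne.symm hv, hv]
    rw [this, h1]
    norm_num
  · have h0 : m u = 0 := Finsupp.notMem_support_iff.mp h
    rw [if_neg h, h0]
    norm_num

lemma Hgood_eq (p : R) (hsq : ∀ m ∈ p.support, (∀ v : V, m v ≤ 1) ∧ m 0 = 0) :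
    Hgood p = (∑ u ∈ Finset.univ.erase (0 : V), X u) * p
      + ∑ u : V, X u ^ 2 * pderiv u p := by
  conv_rhs => rw [← p.support_sum_monomial_coeff]
  rw [Finset.mul_sum]
  have hsum2 : (∑ u : V, (X u : R) ^ 2 * pderiv u (∑ m ∈ p.support, monomial m (coeff m p)))
      = ∑ m ∈ p.support, ∑ u ∈ m.support, X u * monomial m (coeff m p) := by
    rw [Finset.sum_congr rfl fun u _ => by
      rw [map_sum, Finset.mul_sum, Finset.sum_congr rfl fun m hm =>
        Xsq_mul_pderiv_monomial u m (coeff m p) ((hsq m hm).1 u)]]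
    rw [Finset.sum_comm]
    refine Finset.sum_congr rfl fun m _ => ?_
    rw [Finset.sum_ite_mem, Finset.univ_inter]
  rw [hsum2, ← Finset.sum_add_distrib]
  simp only [Hgood]
  refine Finset.sum_congr rfl fun m hm => ?_
  have hms : m.support ⊆ Finset.univ.erase (0 : V) := by
    intro v hv
    refine Finset.mem_erase.mpr ⟨?_, Finset.mem_univ v⟩
    rintro rfl
    exact Finsupp.mem_support_iff.mp hv (hsq m hm).2
  rw [Finset.sum_mul]
  have key := Finset.sum_sdiff (f := fun u => (X u : R) * monomial m (coeff m p)) hms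
  calc (∑ u ∈ Finset.univ.erase (0 : V) \ m.support, (X u : R) * monomial m (coeff m p))
      = (∑ u ∈ Finset.univ.erase (0 : V) \ m.support, (X u : R) * monomial m (coeff m p))
        + ((∑ u ∈ m.support, (X u : R) * monomial m (coeff m p))
          + (∑ u ∈ m.support, (X u : R) * monomial m (coeff m p))) := by
        rw [add_self', add_zero]
    _ = ((∑ u ∈ Finset.univ.erase (0 : V) \ m.support, (X u : R) * monomial m (coeff m p))
        + (∑ u ∈ m.support, (X u : R) * monomial m (coeff m p)))
          + (∑ u ∈ m.support, (X u : R) * monomial m (coeff m p)) := by ring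
    _ = (∑ u ∈ Finset.univ.erase (0 : V), (X u : R) * monomial m (coeff m p))
          + (∑ u ∈ m.support, (X u : R) * monomial m (coeff m p)) := by rw [key]

lemma dOp_Hgood (hn : 1 ≤ n) (p : R) (hd : dOp n p = 0)
    (hsq : ∀ m ∈ p.support, (∀ v : V, m v ≤ 1) ∧ m 0 = 0) :
    dOp n (Hgood p) = p := by
  rw [Hgood_eq p hsq, map_add]
  have h2 : dOp n (∑ u : V, X u ^ 2 * pderiv u p) = 0 := by
    rw [map_sum, Finset.sum_congr rfl fun u _ => by
      rw [dOp_Xsq_mul, dOp_pderiv, hd, map_zero, mul_zero]]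
    exact Finset.sum_const_zero
  have h1 : dOp n ((∑ u ∈ Finset.univ.erase (0 : V), X u) * p) = p := by
    rw [Finset.sum_mul, map_sum, Finset.sum_congr rfl fun u _ => dOp_X_mul u p, hd]
    simp only [mul_zero, add_zero, Finset.sum_const]
    have hcard : (Finset.univ.erase (0 : V)).card = 2 ^ n - 1 := by
      rw [Finset.card_erase_of_mem (Finset.mem_univ _), Finset.card_univ]
      simp [ZMod.card]
    rw [hcard, ← Nat.cast_smul_eq_nsmul (ZMod 2) (2 ^ n - 1) p]
    have hodd : Odd (2 ^ n - 1) :=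
      Nat.Even.sub_odd (Nat.one_le_two_pow) ((Nat.even_pow).mpr ⟨even_two, by omega⟩) odd_one
    obtain ⟨j, hj⟩ := hodd
    rw [hj]
    push_cast
    have : (2 : ZMod 2) = 0 := rfl
    rw [this, zero_mul, zero_add, one_smul]
  rw [h1, h2, add_zero]

lemma Hgood_support (p : R) {m' : (Fin n → ZMod 2) →₀ ℕ}
    (hm' : m' ∈ (Hgood p).support) :
    ∃ m ∈ p.support, ∃ u : V, u ≠ 0 ∧ u ∉ m.support ∧ m' = Finsupp.single u 1 + m := by
  classical
  obtain ⟨m, hm, hm'2⟩ := Finset.mem_biUnion.mp (MvPolynomial.support_sum hm')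
  obtain ⟨u, hu, hm'3⟩ := Finset.mem_biUnion.mp (MvPolynomial.support_sum hm'2)
  refine ⟨m, hm, u, (Finset.mem_erase.mp (Finset.mem_sdiff.mp hu).1).1,
    (Finset.mem_sdiff.mp hu).2, ?_⟩
  rw [X_mul_monomial'] at hm'3
  have := MvPolynomial.support_monomial_subset hm'3
  exact Finset.mem_singleton.mp this

section BasisMonomial

variable (b : Module.Basis (Fin n) (ZMod 2) (Fin n → ZMod 2))

lemma bm_apply (v : V) :
    (∑ j, Finsupp.single (b j) 1 : (Fin n → ZMod 2) →₀ ℕ) v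
      = (Finset.univ.filter (fun j => b j = v)).card := by
  rw [Finsupp.finset_sum_apply]
  rw [Finset.sum_congr rfl fun j _ => Finsupp.single_apply]
  rw [Finset.sum_boole]; exact Nat.cast_id _

lemma bm_le_one (v : V) :
    (∑ j, Finsupp.single (b j) 1 : (Fin n → ZMod 2) →₀ ℕ) v ≤ 1 := by
  rw [bm_apply]
  refine Finset.card_le_one.mpr fun i hi j hj => ?_
  exact b.injective ((Finset.mem_filter.mp hi).2.trans (Finset.mem_filter.mp hj).2.symm)

lemma bm_zero : (∑ j, Finsupp.single (b j) 1 : (Fin n → ZMod 2) →₀ ℕ) 0 = 0 := by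
  rw [bm_apply, Finset.card_eq_zero, Finset.filter_eq_empty_iff]
  exact fun j _ => b.ne_zero j

lemma bm_mem_support (j : Fin n) :
    b j ∈ (∑ j, Finsupp.single (b j) 1 : (Fin n → ZMod 2) →₀ ℕ).support := by
  rw [Finsupp.mem_support_iff, bm_apply]
  exact Finset.card_ne_zero_of_mem (Finset.mem_filter.mpr ⟨Finset.mem_univ j, rfl⟩)

lemma degree_sum_univ (d : (Fin n → ZMod 2) →₀ ℕ) : d.degree = ∑ v : V, d v :=
  Finset.sum_subset (Finset.subset_univ _) fun v _ h => Finsupp.notMem_support_iff.mp h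

lemma single_degree_sum (u : V) : (∑ v : V, (Finsupp.single u 1 : (Fin n → ZMod 2) →₀ ℕ) v) = 1 := by
  rw [Finset.sum_congr rfl fun v _ => Finsupp.single_apply]
  simp

lemma bm_degree :
    (∑ j, Finsupp.single (b j) 1 : (Fin n → ZMod 2) →₀ ℕ).degree = n := by
  rw [degree_sum_univ]
  rw [Finset.sum_congr rfl fun v _ => Finsupp.finset_sum_apply _ _ _]
  rw [Finset.sum_comm]
  rw [Finset.sum_congr rfl fun j _ => single_degree_sum (b j)]
  simp

end BasisMonomial

end Aux

/-- The map `Ψ : L_n → V_n*`, `Ψ(H) = d H`, is well defined and surjective. -/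
theorem psi_wellDefined_surjective (n : ℕ) (hn : 1 ≤ n) :
    (∀ H : MvPolynomial (Fin n → ZMod 2) (ZMod 2), MemL n H → MemVstar n (dOp n H)) ∧
      ∀ p : MvPolynomial (Fin n → ZMod 2) (ZMod 2), MemVstar n p →
        ∃ H : MvPolynomial (Fin n → ZMod 2) (ZMod 2), MemL n H ∧ dOp n H = p := by
  constructor
  · exact fun H hH => hH.2.2.1
  · intro p hp
    obtain ⟨hd, hb⟩ := hp
    have hsq : ∀ m ∈ p.support, (∀ v : Fin n → ZMod 2, m v ≤ 1) ∧ m 0 = 0 := by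
      intro m hm
      obtain ⟨b, rfl⟩ := hb m hm
      exact ⟨bm_le_one b, bm_zero b⟩
    have hdH : dOp n (Hgood p) = p := dOp_Hgood hn p hd hsq
    refine ⟨Hgood p, ⟨?_, ?_, ?_, ?_⟩, hdH⟩
    · intro m' hm'
      obtain ⟨m, hm, u, hu0, hum, rfl⟩ := Hgood_support p hm'
      have hm0 := (hsq m hm).2
      have hm1 := (hsq m hm).1
      have humz : m u = 0 := Finsupp.notMem_support_iff.mp hum
      constructor
      · intro v
        rw [Finsupp.add_apply, Finsupp.single_apply]
        by_cases hv : u = v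
        · subst hv; rw [if_pos rfl, humz]
        · rw [if_neg hv, zero_add]; exact hm1 v
      · rw [Finsupp.add_apply, Finsupp.single_apply, if_neg hu0, zero_add, hm0]
    · simp only [Hgood]
      apply MvPolynomial.IsHomogeneous.sum
      intro m hm
      apply MvPolynomial.IsHomogeneous.sum
      intro u _
      rw [X_mul_monomial']
      apply isHomogeneous_monomial
      obtain ⟨b, rfl⟩ := hb m hm
      rw [degree_sum_univ]
      simp only [Finsupp.add_apply]
      rw [Finset.sum_add_distrib, single_degree_sum, ← degree_sum_univ, bm_degree]
      omega
    · rw [hdH]; exact ⟨hd, hb⟩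
    · intro m' hm'
      obtain ⟨m, hm, u, hu0, hum, rfl⟩ := Hgood_support p hm'
      obtain ⟨b, rfl⟩ := hb m hm
      refine le_antisymm le_top ?_
      rw [← b.span_eq]
      refine Submodule.span_mono ?_
      rintro x ⟨j, rfl⟩
      have h1 : (∑ j, Finsupp.single (b j) 1 : (Fin n → ZMod 2) →₀ ℕ) (b j) ≠ 0 :=
        Finsupp.mem_support_iff.mp (bm_mem_support b j)
      have h2 : (Finsupp.single u 1 + ∑ j, Finsupp.single (b j) 1 :
          (Fin n → ZMod 2) →₀ ℕ) (b j) ≠ 0 := by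
        rw [Finsupp.add_apply]; omega
      exact Finset.mem_coe.mpr (Finsupp.mem_support_iff.mpr h2)
end

section
/- L_n equals the Z/2-linear span of the polynomials ρ(H), where ρ ranges over all linear automorphisms of V (acting on R by renaming variables) and H ranges over all polynomials of the form H = X_{e_1} ⋯ X_{e_i} · X_{e_1+⋯+e_i} · h with 1 < i ≤ n, where h is a nonzero squarefree homogeneous polynomial of degree n − i with d(h) = 0 (with h = 1 when i = n), and where, when i < n, for every monomial X_{v_1}⋯X_{v_{n−i}} in the support of h the images of v_1, …, v_{n−i} in the quotient space V / span{e_1, …, e_i} are linearly independent. -/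
open MvPolynomial

namespace LGen

open Finset

/-! ### Squarefree monomials as finsets -/

variable {n : ℕ}

/-- The squarefree monomial exponent vector associated to a finset of variables. -/
noncomputable def msF (S : Finset (Fin n → ZMod 2)) : (Fin n → ZMod 2) →₀ ℕ :=
  ∑ v ∈ S, Finsupp.single v 1

lemma msF_apply (S : Finset (Fin n → ZMod 2)) (v : Fin n → ZMod 2) :
    msF S v = if v ∈ S then 1 else 0 := by
  classical
  rw [msF, Finset.sum_apply']
  by_cases h : v ∈ S
  · rw [Finset.sum_eq_single v (fun b _ hb => Finsupp.single_eq_of_ne' hb) (by tauto)]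
    simp [h]
  · rw [if_neg h, Finset.sum_eq_zero]
    intro b hb
    exact Finsupp.single_eq_of_ne' (by rintro rfl; exact h hb)

lemma support_msF (S : Finset (Fin n → ZMod 2)) : (msF S).support = S := by
  ext v
  simp [Finsupp.mem_support_iff, msF_apply]

lemma msF_injective : Function.Injective (msF (n := n)) := by
  intro S T h
  rw [← support_msF S, ← support_msF T, h]

lemma msF_union {S T : Finset (Fin n → ZMod 2)} (h : Disjoint S T) :
    msF (S ∪ T) = msF S + msF T := by
  rw [msF, msF, msF, Finset.sum_union h]

lemma msF_sdiff {C S : Finset (Fin n → ZMod 2)} (h : C ⊆ S) :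
    msF C + msF (S \ C) = msF S := by
  rw [← msF_union disjoint_sdiff, Finset.union_sdiff_of_subset h]

lemma msF_erase {S : Finset (Fin n → ZMod 2)} {v : Fin n → ZMod 2} (h : v ∈ S) :
    msF S - Finsupp.single v 1 = msF (S.erase v) := by
  ext w
  rw [Finsupp.tsub_apply, msF_apply, msF_apply, Finsupp.single_apply]
  by_cases hw : w = v
  · subst hw; simp [h]
  · simp [hw, Ne.symm hw, Finset.mem_erase]

lemma degree_msF (S : Finset (Fin n → ZMod 2)) : (msF S).degree = S.card := by
  classical
  rw [Finsupp.degree_apply, support_msF]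
  rw [Finset.sum_congr rfl (fun v hv => by rw [msF_apply, if_pos hv])]
  simp

/-- a squarefree exponent vector is `msF` of its support -/
lemma eq_msF_support {m : (Fin n → ZMod 2) →₀ ℕ} (h : ∀ v, m v ≤ 1) :
    m = msF m.support := by
  ext v
  rw [msF_apply]
  by_cases hv : v ∈ m.support
  · rw [if_pos hv]
    have h1 := Finsupp.mem_support_iff.mp hv
    have h2 := h v
    omega
  · rw [if_neg hv]
    simpa using (Finsupp.notMem_support_iff.mp hv)

/-! ### `F₂` linear algebra: linear independence via zero-sum subsets -/

variable {M N : Type*} [AddCommGroup M] [Module (ZMod 2) M]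
  [AddCommGroup N] [Module (ZMod 2) N]

lemma zmod2_cases (c : ZMod 2) : c = 0 ∨ c = 1 := by revert c; decide

lemma add_self_zmod2 (x : M) : x + x = 0 := by
  rw [← two_smul (ZMod 2) x, show (2 : ZMod 2) = 0 by decide, zero_smul]

lemma eq_of_add_eq_zero_zmod2 {x y : M} (h : x + y = 0) : x = y := by
  have := add_self_zmod2 y
  have : x + y = y + y := by rw [h, this]
  exact add_right_cancel this

/-- Key `F₂` principle: a finite family `f` restricted to a finset `T` is linearly
independent iff no nonempty subset of `T` has `f`-sum zero. -/
lemma li_map_iff (T : Finset M) (f : M →ₗ[ZMod 2] N) :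
    LinearIndependent (ZMod 2) (fun x : {x // x ∈ T} => f (x : M)) ↔
      ∀ A ⊆ T, f (∑ v ∈ A, v) = 0 → A = ∅ := by
  classical
  rw [Fintype.linearIndependent_iff]
  constructor
  · intro H A hA hsum
    have key := H (fun x => if (x : M) ∈ A then 1 else 0) ?_
    · ext v
      simp only [Finset.notMem_empty, iff_false]
      intro hv
      have := key ⟨v, hA hv⟩
      simp [hv] at this
    · have e1 : ∑ i : {x // x ∈ T}, (if (i : M) ∈ A then (1 : ZMod 2) else 0) • f (i : M)
          = ∑ v ∈ T, (if v ∈ A then f v else 0) := by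
        rw [← Finset.sum_coe_sort T (fun v => if v ∈ A then f v else 0)]
        refine Finset.sum_congr rfl fun i _ => ?_
        by_cases h : (i : M) ∈ A <;> simp [h]
      rw [e1, Finset.sum_ite_mem, Finset.inter_eq_right.mpr hA, ← map_sum, hsum]
  · intro H c hc i
    by_contra hne
    have hci : c i = 1 := (zmod2_cases (c i)).resolve_left hne
    have hsub : ∀ x ∈ T.attach.filter (fun x => c x = 1), ∀ y ∈ T.attach.filter (fun x => c x = 1),
        (x : M) = (y : M) → x = y := fun x _ y _ h => Subtype.ext h
    set A : Finset M := Finset.image Subtype.val (T.attach.filter (fun x => c x = 1)) with hA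
    have hAT : A ⊆ T := by
      intro v hv
      rw [hA, Finset.mem_image] at hv
      obtain ⟨x, _, rfl⟩ := hv
      exact x.2
    have hAne : A ≠ ∅ := by
      have : (i : M) ∈ A := by
        rw [hA, Finset.mem_image]
        exact ⟨i, Finset.mem_filter.mpr ⟨Finset.mem_attach _ _, hci⟩, rfl⟩
      intro h; rw [h] at this; simp at this
    apply hAne
    apply H A hAT
    have e2 : ∑ v ∈ A, f v = ∑ x ∈ T.attach.filter (fun x => c x = 1), f (x : M) := by
      rw [hA]; exact Finset.sum_image hsub
    have e3 : ∑ x ∈ T.attach.filter (fun x => c x = 1), f (x : M)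
        = ∑ x : {x // x ∈ T}, c x • f (x : M) := by
      rw [Finset.sum_filter, ← Finset.attach_eq_univ (s := T)]
      refine Finset.sum_congr rfl fun x _ => ?_
      rcases zmod2_cases (c x) with h | h <;> simp [h]
    rw [map_sum, e2, e3, hc]

/-- Zero-sum-freeness of a finset of vectors. -/
def ZFree (T : Finset M) : Prop := ∀ A ⊆ T, ∑ v ∈ A, v = 0 → A = ∅

lemma zfree_iff_li (T : Finset M) :
    ZFree T ↔ LinearIndependent (ZMod 2) (fun x : {x // x ∈ T} => (x : M)) := by
  have h := li_map_iff (N := M) T LinearMap.id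
  simp only [LinearMap.id_coe, id_eq] at h
  rw [h]
  exact Iff.rfl

lemma li_mkQ_iff (U : Submodule (ZMod 2) M) (T : Finset M) :
    LinearIndependent (ZMod 2) (fun x : {x // x ∈ T} => U.mkQ (x : M)) ↔
      ∀ A ⊆ T, (∑ v ∈ A, v) ∈ U → A = ∅ := by
  rw [li_map_iff T U.mkQ]
  refine ⟨fun H A hA h => H A hA ?_, fun H A hA h => H A hA ?_⟩
  · rw [Submodule.mkQ_apply, Submodule.Quotient.mk_eq_zero]; exact h
  · rw [Submodule.mkQ_apply, Submodule.Quotient.mk_eq_zero] at h; exact h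


/-! ### Lemmas about `dOp` -/

lemma dOp_monomial (m : (Fin n → ZMod 2) →₀ ℕ) (c : ZMod 2) :
    dOp n (monomial m c) =
      ∑ v : Fin n → ZMod 2, monomial (m - Finsupp.single v 1) (c * (m v : ZMod 2)) := by
  rw [dOp, LinearMap.sum_apply]
  refine Finset.sum_congr rfl fun v _ => ?_
  simp [pderiv_monomial]

lemma dOp_sq (S : Finset (Fin n → ZMod 2)) :
    dOp n (monomial (msF S) 1) = ∑ v ∈ S, monomial (msF (S.erase v)) 1 := by
  rw [dOp_monomial]
  rw [← Finset.sum_subset (Finset.subset_univ S) (fun v _ hv => by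
    rw [msF_apply, if_neg hv]; simp)]
  refine Finset.sum_congr rfl fun v hv => ?_
  rw [msF_erase hv, msF_apply, if_pos hv]
  norm_num

lemma dOp_mul (p q : MvPolynomial (Fin n → ZMod 2) (ZMod 2)) :
    dOp n (p * q) = dOp n p * q + p * dOp n q := by
  rw [dOp, LinearMap.sum_apply, LinearMap.sum_apply, LinearMap.sum_apply]
  rw [Finset.sum_mul, Finset.mul_sum, ← Finset.sum_add_distrib]
  refine Finset.sum_congr rfl fun v _ => ?_
  show pderiv v (p * q) = pderiv v p * q + p * pderiv v q
  rw [pderiv_mul]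

lemma mapDomain_sub_single (f : (Fin n → ZMod 2) → (Fin n → ZMod 2))
    (hf : Function.Injective f) (m : (Fin n → ZMod 2) →₀ ℕ) (u : Fin n → ZMod 2) :
    Finsupp.mapDomain f (m - Finsupp.single u 1)
      = Finsupp.mapDomain f m - Finsupp.single (f u) 1 := by
  ext y
  by_cases hy : ∃ w, f w = y
  · obtain ⟨w, rfl⟩ := hy
    rw [Finsupp.mapDomain_apply hf, Finsupp.tsub_apply, Finsupp.tsub_apply,
      Finsupp.mapDomain_apply hf]
    by_cases hw : w = u
    · subst hw; simp
    · rw [Finsupp.single_eq_of_ne' (fun h => hw h.symm),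
        Finsupp.single_eq_of_ne' (fun h => hw (hf h).symm)]
  · push_neg at hy
    rw [Finsupp.mapDomain_notin_range _ _ (by simpa using hy), Finsupp.tsub_apply,
      Finsupp.mapDomain_notin_range _ _ (by simpa using hy),
      Finsupp.single_eq_of_ne' (fun h => hy u h)]
    simp

lemma dOp_rename (ρ : (Fin n → ZMod 2) ≃ₗ[ZMod 2] (Fin n → ZMod 2))
    (p : MvPolynomial (Fin n → ZMod 2) (ZMod 2)) :
    dOp n (rename ⇑ρ p) = rename ⇑ρ (dOp n p) := by
  induction p using MvPolynomial.induction_on' with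
  | monomial m c =>
    rw [rename_monomial, dOp_monomial, dOp_monomial, map_sum]
    rw [← Fintype.sum_equiv ρ.toEquiv
      (fun u => monomial (Finsupp.mapDomain ⇑ρ m - Finsupp.single (ρ.toEquiv u) 1)
        (c * ((Finsupp.mapDomain ⇑ρ m) (ρ.toEquiv u) : ZMod 2)))
      (fun v => monomial (Finsupp.mapDomain ⇑ρ m - Finsupp.single v 1)
        (c * ((Finsupp.mapDomain ⇑ρ m) v : ZMod 2))) (fun u => rfl)]
    refine Finset.sum_congr rfl fun u _ => ?_
    rw [rename_monomial]
    rw [show ρ.toEquiv u = ρ u from rfl, Finsupp.mapDomain_apply ρ.injective,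
      mapDomain_sub_single _ ρ.injective]
  | add p q hp hq => simp [map_add, hp, hq]

lemma natCast_mul_pred_zmod2 (k : ℕ) : ((k : ZMod 2) * ((k - 1 : ℕ) : ZMod 2)) = 0 := by
  rcases Nat.even_or_odd k with h | h
  · rw [show ((k : ZMod 2)) = 0 by
      rw [ZMod.natCast_eq_zero_iff]; exact h.two_dvd, zero_mul]
  · rw [show (((k - 1 : ℕ) : ZMod 2)) = 0 by
      rw [ZMod.natCast_eq_zero_iff]
      rcases k with _ | k
      · simp at h
      · simpa using (Nat.Odd.sub_odd h odd_one).two_dvd]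
    rw [mul_zero]

lemma dOp_apply_sum (p : MvPolynomial (Fin n → ZMod 2) (ZMod 2)) :
    dOp n p = ∑ v : Fin n → ZMod 2, pderiv v p := by
  rw [dOp, LinearMap.sum_apply]
  rfl

lemma pderiv_pderiv_self (v : Fin n → ZMod 2) (p : MvPolynomial (Fin n → ZMod 2) (ZMod 2)) :
    pderiv v (pderiv v p) = 0 := by
  induction p using MvPolynomial.induction_on' with
  | monomial m c =>
    rw [pderiv_monomial, pderiv_monomial, mul_assoc]
    have hz : (m v : ZMod 2) * (((m - Finsupp.single v 1 : (Fin n → ZMod 2) →₀ ℕ) v : ℕ) : ZMod 2) = 0 := by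
      rw [Finsupp.tsub_apply, Finsupp.single_eq_same]
      exact natCast_mul_pred_zmod2 (m v)
    rw [hz, mul_zero, monomial_zero]
  | add p q hp hq => rw [map_add, map_add, hp, hq, add_zero]

lemma pderiv_pderiv_comm (v w : Fin n → ZMod 2) (p : MvPolynomial (Fin n → ZMod 2) (ZMod 2)) :
    pderiv v (pderiv w p) = pderiv w (pderiv v p) := by
  by_cases hvw : v = w
  · subst hvw; rfl
  · induction p using MvPolynomial.induction_on' with
    | monomial m c =>
      rw [pderiv_monomial, pderiv_monomial, pderiv_monomial, pderiv_monomial]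
      have h1 : ((m - Finsupp.single w 1 : (Fin n → ZMod 2) →₀ ℕ) v) = m v := by
        rw [Finsupp.tsub_apply, Finsupp.single_eq_of_ne' (fun h => hvw h.symm)]
        rfl
      have h2 : ((m - Finsupp.single v 1 : (Fin n → ZMod 2) →₀ ℕ) w) = m w := by
        rw [Finsupp.tsub_apply, Finsupp.single_eq_of_ne' hvw]
        rfl
      have h3 : m - Finsupp.single w 1 - Finsupp.single v 1
          = m - Finsupp.single v 1 - Finsupp.single w 1 := tsub_right_comm
      rw [h1, h2, h3]
      ring_nf
    | add p q hp hq => rw [map_add, map_add, map_add, map_add, hp, hq]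

lemma dOp_dOp (p : MvPolynomial (Fin n → ZMod 2) (ZMod 2)) : dOp n (dOp n p) = 0 := by
  have h1 : dOp n (dOp n p)
      = ∑ v : Fin n → ZMod 2, ∑ w : Fin n → ZMod 2, pderiv w (pderiv v p) := by
    rw [dOp_apply_sum p, map_sum]
    exact Finset.sum_congr rfl fun v _ => dOp_apply_sum _
  rw [h1, ← Finset.sum_product']
  refine Finset.sum_involution (fun a _ => (a.2, a.1)) ?_ ?_ (fun a ha => Finset.mem_univ _)
    (fun a ha => rfl)
  · rintro ⟨v, w⟩ -
    simp only
    rw [pderiv_pderiv_comm]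
    exact add_self_zmod2 _
  · rintro ⟨v, w⟩ - h
    simp only [ne_eq, Prod.mk.injEq, not_and]
    intro h1
    subst h1
    exfalso
    apply h
    simp only
    exact pderiv_pderiv_self _ _

/-- support of a sum of distinct monomials with coefficient 1 -/
lemma support_sum_monomials {α : Type*} (s : Finset α) (f : α → ((Fin n → ZMod 2) →₀ ℕ))
    (hf : Set.InjOn f s) :
    (∑ m ∈ s, monomial (f m) (1 : ZMod 2)).support = s.image f := by
  classical
  ext μ
  rw [MvPolynomial.mem_support_iff]
  rw [show (MvPolynomial.coeff μ (∑ m ∈ s, monomial (f m) (1 : ZMod 2)))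
      = ∑ m ∈ s, if f m = μ then (1 : ZMod 2) else 0 by
    rw [MvPolynomial.coeff_sum]
    exact Finset.sum_congr rfl fun m _ => MvPolynomial.coeff_monomial _ _ _]
  constructor
  · intro h
    by_contra hμ
    apply h
    refine Finset.sum_eq_zero fun m hm => ?_
    rw [if_neg]
    intro he
    exact hμ (Finset.mem_image.mpr ⟨m, hm, he⟩)
  · intro h
    obtain ⟨m0, hm0, rfl⟩ := Finset.mem_image.mp h
    rw [Finset.sum_eq_single m0 (fun b hb hne => by
        rw [if_neg]; intro he; exact hne (hf hb hm0 he))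
      (fun h => absurd hm0 h)]
    simp

lemma coeff_eq_one {p : MvPolynomial (Fin n → ZMod 2) (ZMod 2)}
    {m : (Fin n → ZMod 2) →₀ ℕ} (h : m ∈ p.support) : MvPolynomial.coeff m p = 1 := by
  have := MvPolynomial.mem_support_iff.mp h
  rcases zmod2_cases' (MvPolynomial.coeff m p) with h1 | h1
  · exact absurd h1 this
  · exact h1
where zmod2_cases' (c : ZMod 2) : c = 0 ∨ c = 1 := by revert c; decide

lemma eq_sum_support (p : MvPolynomial (Fin n → ZMod 2) (ZMod 2)) :
    p = ∑ m ∈ p.support, monomial m (1 : ZMod 2) := by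
  conv_lhs => rw [p.as_sum]
  exact Finset.sum_congr rfl fun m hm => by rw [coeff_eq_one hm]




/-! ### Linear algebra over `F₂` -/

lemma finrank_V : Module.finrank (ZMod 2) (Fin n → ZMod 2) = n := by
  rw [Module.finrank_pi]
  exact Fintype.card_fin n

lemma three_le_card_circuit {C : Finset (Fin n → ZMod 2)} (hne : C.Nonempty)
    (hsum : ∑ v ∈ C, v = 0) (h0 : (0 : Fin n → ZMod 2) ∉ C) : 3 ≤ C.card := by
  by_contra h
  push_neg at h
  interval_cases hc : C.card
  · rw [Finset.card_eq_zero] at hc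
    exact absurd hc (Finset.nonempty_iff_ne_empty.mp hne)
  · obtain ⟨a, rfl⟩ := Finset.card_eq_one.mp hc
    rw [Finset.sum_singleton] at hsum
    rw [hsum] at *
    exact h0 (Finset.mem_singleton_self 0)
  · obtain ⟨a, b, hab, rfl⟩ := Finset.card_eq_two.mp hc
    rw [Finset.sum_pair hab] at hsum
    exact hab (eq_of_add_eq_zero_zmod2 hsum)

lemma exists_basis_of_zfree (hn : 0 < n) {T : Finset (Fin n → ZMod 2)}
    (hcard : T.card = n) (hz : ZFree T) :
    ∃ b : Module.Basis (Fin n) (ZMod 2) (Fin n → ZMod 2),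
      Set.range ⇑b = ↑T ∧ msF T = ∑ j : Fin n, Finsupp.single (b j) 1 := by
  classical
  have hli := (zfree_iff_li T).mp hz
  have hcc : Fintype.card {x // x ∈ T} = Module.finrank (ZMod 2) (Fin n → ZMod 2) := by
    rw [Fintype.card_coe, hcard, finrank_V]
  haveI : Nonempty {x // x ∈ T} := by
    rw [Finset.nonempty_coe_sort]
    exact Finset.card_pos.mp (by omega)
  let b0 := basisOfLinearIndependentOfCardEqFinrank hli hcc
  have hb0 : ⇑b0 = fun x : {x // x ∈ T} => (x : Fin n → ZMod 2) :=
    coe_basisOfLinearIndependentOfCardEqFinrank hli hcc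
  let e : {x // x ∈ T} ≃ Fin n := T.equivFin.trans (finCongr hcard)
  refine ⟨b0.reindex e, ?_, ?_⟩
  · rw [Module.Basis.range_reindex, hb0]
    exact Subtype.range_coe
  · rw [show ∑ j : Fin n, Finsupp.single ((b0.reindex e) j) 1
        = ∑ j : Fin n, Finsupp.single (b0 (e.symm j)) 1 from
      Finset.sum_congr rfl fun j _ => by rw [Module.Basis.reindex_apply]]
    rw [Equiv.sum_comp e.symm (fun x => Finsupp.single (b0 x) 1), hb0]
    have hs : ∑ x : {x // x ∈ T}, Finsupp.single (x : Fin n → ZMod 2) (1 : ℕ)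
        = ∑ v ∈ T, Finsupp.single v 1 := Finset.sum_coe_sort T (fun v => Finsupp.single v (1 : ℕ))
    rw [msF]
    exact hs.symm

lemma basis_image_props (b : Module.Basis (Fin n) (ZMod 2) (Fin n → ZMod 2)) :
    (∑ j : Fin n, Finsupp.single (b j) 1 : (Fin n → ZMod 2) →₀ ℕ)
        = msF (Finset.univ.image ⇑b)
      ∧ (Finset.univ.image ⇑b).card = n
      ∧ ZFree (Finset.univ.image ⇑b) := by
  classical
  have hinj : Function.Injective ⇑b := b.injective
  refine ⟨?_, ?_, ?_⟩
  · rw [msF, Finset.sum_image (fun x _ y _ h => hinj h)]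
  · rw [Finset.card_image_of_injective _ hinj, Finset.card_univ, Fintype.card_fin]
  · intro A hA hsum
    have hrep : A = (Finset.univ.filter (fun j => b j ∈ A)).image ⇑b := by
      ext v
      simp only [Finset.mem_image, Finset.mem_filter, Finset.mem_univ, true_and]
      constructor
      · intro hv
        obtain ⟨j, _, rfl⟩ := Finset.mem_image.mp (hA hv)
        exact ⟨j, hv, rfl⟩
      · rintro ⟨j, hj, rfl⟩; exact hj
    have hsum2 : ∑ j ∈ Finset.univ.filter (fun j => b j ∈ A), b j = 0 := by
      have himg : ∑ x ∈ (Finset.univ.filter (fun j => b j ∈ A)).image ⇑b, x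
          = ∑ j ∈ Finset.univ.filter (fun j => b j ∈ A), b j :=
        Finset.sum_image (fun x _ y _ h => hinj h)
      rw [← himg, ← hrep]
      exact hsum
    have hli := b.linearIndependent
    rw [Fintype.linearIndependent_iff] at hli
    have key := hli (fun j => if b j ∈ A then 1 else 0) ?_
    · rw [hrep]
      rw [Finset.image_eq_empty]
      rw [Finset.filter_eq_empty_iff]
      intro j _
      have := key j
      by_contra hj
      rw [if_pos hj] at this
      exact one_ne_zero this
    · rw [← hsum2, Finset.sum_filter]
      refine Finset.sum_congr rfl fun j _ => ?_
      by_cases h : b j ∈ A <;> simp [h]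

lemma exists_unique_circuit {S : Finset (Fin n → ZMod 2)} (h0 : (0 : Fin n → ZMod 2) ∉ S)
    (hcard : S.card = n + 1) (hspan : Submodule.span (ZMod 2) (↑S : Set (Fin n → ZMod 2)) = ⊤) :
    ∃ C ⊆ S, C.Nonempty ∧ ∑ v ∈ C, v = 0 ∧
      ∀ C' ⊆ S, C'.Nonempty → ∑ v ∈ C', v = 0 → C' = C := by
  classical
  -- existence
  have hnz : ¬ ZFree S := by
    intro hz
    have hli := (zfree_iff_li S).mp hz
    have := hli.fintype_card_le_finrank
    rw [Fintype.card_coe, hcard, finrank_V] at this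
    omega
  rw [ZFree] at hnz
  push_neg at hnz
  obtain ⟨C, hCS, hCsum, hCne⟩ := hnz
  have hCne : C.Nonempty := hCne
  -- uniqueness: key lemma
  have key : ∀ A B : Finset (Fin n → ZMod 2), A ⊆ S → B ⊆ S → A.Nonempty →
      (∑ v ∈ A, v) = 0 → (∑ v ∈ B, v) = 0 → ∀ b ∈ B, b ∉ A → False := by
    intro A B hAS hBS hAne hAsum hBsum b hbB hbA
    obtain ⟨a, haA⟩ := hAne
    have hab : a ≠ b := fun h => hbA (h ▸ haA)
    have haS : a ∈ S := hAS haA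
    have hbS : b ∈ S := hBS hbB
    set S' : Finset (Fin n → ZMod 2) := S \ {a, b} with hS'
    have ha_span : a ∈ Submodule.span (ZMod 2) (↑S' : Set (Fin n → ZMod 2)) := by
      have : a = ∑ v ∈ A.erase a, v := by
        have := Finset.add_sum_erase A id haA
        simp only [id_eq] at this
        exact eq_of_add_eq_zero_zmod2 (by rw [this, hAsum])
      rw [this]
      refine Submodule.sum_mem _ fun v hv => Submodule.subset_span ?_
      have hva : v ≠ a := Finset.ne_of_mem_erase hv
      have hvA : v ∈ A := Finset.mem_of_mem_erase hv
      have hvb : v ≠ b := fun h => hbA (h ▸ hvA)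
      rw [hS']
      simp only [Finset.coe_sdiff, Set.mem_diff, Finset.mem_coe]
      exact ⟨hAS hvA, by simp [hva, hvb]⟩
    have hb_span : b ∈ Submodule.span (ZMod 2) (↑S' : Set (Fin n → ZMod 2)) := by
      have hbrep : b = ∑ v ∈ B.erase b, v := by
        have := Finset.add_sum_erase B id hbB
        simp only [id_eq] at this
        exact eq_of_add_eq_zero_zmod2 (by rw [this, hBsum])
      rw [hbrep]
      refine Submodule.sum_mem _ fun v hv => ?_
      by_cases hva : v = a
      · rw [hva]; exact ha_span
      · refine Submodule.subset_span ?_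
        have hvb : v ≠ b := Finset.ne_of_mem_erase hv
        have hvB : v ∈ B := Finset.mem_of_mem_erase hv
        rw [hS']
        simp only [Finset.coe_sdiff, Set.mem_diff, Finset.mem_coe]
        exact ⟨hBS hvB, by simp [hva, hvb]⟩
    have hspan' : Submodule.span (ZMod 2) (↑S' : Set (Fin n → ZMod 2)) = ⊤ := by
      rw [eq_top_iff, ← hspan, Submodule.span_le]
      intro v hv
      rw [Finset.mem_coe] at hv
      by_cases hva : v = a
      · rw [hva]; exact ha_span
      by_cases hvb : v = b
      · rw [hvb]; exact hb_span
      · refine Submodule.subset_span ?_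
        rw [hS']
        simp only [Finset.coe_sdiff, Set.mem_diff, Finset.mem_coe]
        exact ⟨hv, by simp [hva, hvb]⟩
    have hrank : Module.finrank (ZMod 2)
        ↥(Submodule.span (ZMod 2) (↑S' : Set (Fin n → ZMod 2))) ≤ S'.card :=
      finrank_span_finset_le_card S'
    rw [hspan', finrank_top, finrank_V] at hrank
    have hcard' : S'.card = n - 1 := by
      rw [hS', Finset.card_sdiff_of_subset (by
        intro x hx
        simp only [Finset.mem_insert, Finset.mem_singleton] at hx
        rcases hx with rfl | rfl
        exacts [haS, hbS])]
      rw [hcard, Finset.card_insert_of_notMem (by simpa using hab), Finset.card_singleton]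
      omega
    have h2card : 2 ≤ S.card := Finset.one_lt_card.mpr ⟨a, haS, b, hbS, hab⟩
    omega
  refine ⟨C, hCS, hCne, hCsum, fun C' hC'S hC'ne hC'sum => ?_⟩
  have h1 : ∀ x ∈ C', x ∈ C := by
    intro x hx
    by_contra hxc
    exact key C C' hCS hC'S hCne hCsum hC'sum x hx hxc
  have h2 : ∀ x ∈ C, x ∈ C' := by
    intro x hx
    by_contra hxc
    exact key C' C hC'S hCS hC'ne hC'sum hCsum x hx hxc
  exact Finset.Subset.antisymm h1 h2

lemma card_filter_lt (i : ℕ) (hin : i ≤ n) :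
    (Finset.univ.filter fun k : Fin n => (k : ℕ) < i).card = i := by
  classical
  have : (Finset.univ.filter fun k : Fin n => (k : ℕ) < i)
      = (Finset.univ : Finset (Fin i)).image (Fin.castLE hin) := by
    ext k
    simp only [Finset.mem_filter, Finset.mem_univ, true_and, Finset.mem_image]
    constructor
    · intro hk
      exact ⟨⟨(k : ℕ), hk⟩, Fin.ext rfl⟩
    · rintro ⟨j, -, rfl⟩
      simpa using j.2
  rw [this, Finset.card_image_of_injective _ (Fin.castLE_injective hin), Finset.card_univ,
    Fintype.card_fin]

lemma exists_rho {i : ℕ} (W : Finset (Fin n → ZMod 2)) (hzf : ZFree W)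
    (hcW : W.card = i) (hin : i ≤ n) :
    ∃ ρ : (Fin n → ZMod 2) ≃ₗ[ZMod 2] (Fin n → ZMod 2),
      (Finset.univ.filter fun k : Fin n => (k : ℕ) < i).image (fun k => ρ (Pi.single k 1)) = W := by
  classical
  have hliW : LinearIndepOn (ZMod 2) id (↑W : Set (Fin n → ZMod 2)) := by
    have := (zfree_iff_li W).mp hzf
    exact this
  let ext : Set (Fin n → ZMod 2) := hliW.extend (Set.subset_univ _)
  let b0 : Module.Basis ↥ext (ZMod 2) (Fin n → ZMod 2) := Module.Basis.extend hliW
  haveI : Fintype ↥ext := FiniteDimensional.fintypeBasisIndex b0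
  have hWext : (↑W : Set (Fin n → ZMod 2)) ⊆ ext := hliW.subset_extend _
  have hcext : Fintype.card ↥ext = n := by
    have := Module.finrank_eq_card_basis b0
    rw [finrank_V] at this
    omega
  set EXT : Finset (Fin n → ZMod 2) := ext.toFinset with hEXT
  have hWE : W ⊆ EXT := by
    intro x hx
    rw [hEXT, Set.mem_toFinset]
    exact hWext hx
  have hcE : EXT.card = n := by rw [hEXT, Set.toFinset_card, hcext]
  set D : Finset (Fin n → ZMod 2) := EXT \ W with hD
  have hcD : D.card = n - i := by rw [hD, Finset.card_sdiff_of_subset hWE, hcE, hcW]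
  let e1 : Fin i ≃ {x // x ∈ W} := (W.equivFin.trans (finCongr hcW)).symm
  let e2 : Fin (n - i) ≃ {x // x ∈ D} := (D.equivFin.trans (finCongr hcD)).symm
  let g : Fin n → (Fin n → ZMod 2) := fun k =>
    if h : (k : ℕ) < i then (e1 ⟨(k : ℕ), h⟩ : Fin n → ZMod 2)
    else (e2 ⟨(k : ℕ) - i, by omega⟩ : Fin n → ZMod 2)
  have hgW : ∀ k : Fin n, (k : ℕ) < i → g k ∈ W := by
    intro k hk
    simp only [g, dif_pos hk]
    exact (e1 ⟨(k : ℕ), hk⟩).2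
  have hgD : ∀ k : Fin n, ¬ (k : ℕ) < i → g k ∈ D := by
    intro k hk
    simp only [g, dif_neg hk]
    exact (e2 ⟨(k : ℕ) - i, by omega⟩).2
  have hginj : Function.Injective g := by
    intro k k' h
    by_cases hk : (k : ℕ) < i <;> by_cases hk' : (k' : ℕ) < i
    · simp only [g, dif_pos hk, dif_pos hk'] at h
      have h2 := congrArg Fin.val (e1.injective (Subtype.ext h))
      exact Fin.ext h2
    · exact absurd (h ▸ hgW k hk) (Finset.mem_sdiff.mp (hgD k' hk')).2
    · exact absurd (h.symm ▸ hgW k' hk') (Finset.mem_sdiff.mp (hgD k hk)).2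
    · simp only [g, dif_neg hk, dif_neg hk'] at h
      have h2 := congrArg Fin.val (e2.injective (Subtype.ext h))
      simp only at h2
      have hki := k.2
      have hk'i := k'.2
      exact Fin.ext (by omega)
  have hgE : ∀ k, g k ∈ EXT := by
    intro k
    by_cases hk : (k : ℕ) < i
    · exact hWE (hgW k hk)
    · exact (Finset.mem_sdiff.mp (hgD k hk)).1
  let g' : Fin n → {x // x ∈ EXT} := fun k => ⟨g k, hgE k⟩
  have hg'inj : Function.Injective g' := fun k k' h => hginj (Subtype.ext_iff.mp h)
  have hg'bij : Function.Bijective g' := by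
    rw [Fintype.bijective_iff_injective_and_card]
    refine ⟨hg'inj, ?_⟩
    rw [Fintype.card_coe, hcE, Fintype.card_fin]
  let eg : Fin n ≃ {x // x ∈ EXT} := Equiv.ofBijective g' hg'bij
  let esub : {x // x ∈ EXT} ≃ ↥ext := Equiv.subtypeEquivRight (fun x => by
    rw [hEXT, Set.mem_toFinset])
  let b : Module.Basis (Fin n) (ZMod 2) (Fin n → ZMod 2) := b0.reindex (eg.trans esub).symm
  have hb : ∀ k, b k = g k := by
    intro k
    rw [Module.Basis.reindex_apply, Equiv.symm_symm]
    rw [show b0 ((eg.trans esub) k) = ((eg.trans esub) k : Fin n → ZMod 2) from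
      congrFun (Module.Basis.coe_extend hliW) _]
    rfl
  refine ⟨(Pi.basisFun (ZMod 2) (Fin n)).equiv b (Equiv.refl _), ?_⟩
  have hρ : ∀ k : Fin n, ((Pi.basisFun (ZMod 2) (Fin n)).equiv b (Equiv.refl _)) (Pi.single k 1) = b k := by
    intro k
    rw [← Pi.basisFun_apply, Module.Basis.equiv_apply, Equiv.refl_apply]
  have himg : (Finset.univ.filter fun k : Fin n => (k : ℕ) < i).image
      (fun k => ((Pi.basisFun (ZMod 2) (Fin n)).equiv b (Equiv.refl _)) (Pi.single k 1))
      = (Finset.univ.filter fun k : Fin n => (k : ℕ) < i).image (fun k => b k) := by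
    refine Finset.image_congr fun k _ => hρ k
  rw [himg]
  refine Finset.eq_of_subset_of_card_le ?_ ?_
  · intro v hv
    obtain ⟨k, hk, rfl⟩ := Finset.mem_image.mp hv
    rw [Finset.mem_filter] at hk
    rw [hb]
    exact hgW k hk.2
  · rw [Finset.card_image_of_injective _ (fun x y h => by
      apply hginj
      rw [← hb, ← hb, h])]
    rw [card_filter_lt i hin, hcW]


/-! ### More `F₂` combinatorics -/

lemma sum_add_sum_eq_sum_symmDiff {M : Type*} [AddCommGroup M] [Module (ZMod 2) M]
    [DecidableEq M] (A B : Finset M) :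
    (∑ v ∈ A, v) + (∑ v ∈ B, v) = ∑ v ∈ symmDiff A B, v := by
  classical
  have h1 : (∑ v ∈ A ∪ B, v) + (∑ v ∈ A ∩ B, v) = (∑ v ∈ A, v) + (∑ v ∈ B, v) :=
    Finset.sum_union_inter
  have h2 : symmDiff A B ∪ (A ∩ B) = A ∪ B := symmDiff_sup_inf A B
  have h3 : Disjoint (symmDiff A B) (A ∩ B) := disjoint_symmDiff_inf A B
  have h4 : (∑ v ∈ A ∪ B, v) = (∑ v ∈ symmDiff A B, v) + (∑ v ∈ A ∩ B, v) := by
    rw [← h2, Finset.sum_union h3]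
  rw [← h1, h4, add_assoc, add_self_zmod2, add_zero]

lemma zfree_eq_of_sum_eq {M : Type*} [AddCommGroup M] [Module (ZMod 2) M] [DecidableEq M]
    {T A B : Finset M} (hz : ZFree T) (hA : A ⊆ T) (hB : B ⊆ T)
    (h : (∑ v ∈ A, v) = (∑ v ∈ B, v)) : A = B := by
  have hsd : ∑ v ∈ symmDiff A B, v = 0 := by
    rw [← sum_add_sum_eq_sum_symmDiff, h, add_self_zmod2]
  have hres := hz (symmDiff A B) (by
    intro x hx
    rcases Finset.mem_union.mp (symmDiff_le_sup (a := A) (b := B) hx) with h' | h'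
    exacts [hA h', hB h']) hsd
  exact symmDiff_eq_bot.mp (hres.trans Finset.bot_eq_empty.symm)

lemma zfree_image_linequiv {n : ℕ} (ρ : (Fin n → ZMod 2) ≃ₗ[ZMod 2] (Fin n → ZMod 2))
    {T : Finset (Fin n → ZMod 2)} (hz : ZFree T) : ZFree (T.image ⇑ρ) := by
  classical
  intro A hA hsum
  have hB : A.image ⇑ρ.symm ⊆ T := by
    intro x hx
    obtain ⟨y, hy, rfl⟩ := Finset.mem_image.mp hx
    obtain ⟨z, hz', rfl⟩ := Finset.mem_image.mp (hA hy)
    simpa using hz'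
  have hsum2 : ∑ v ∈ A.image ⇑ρ.symm, v = 0 := by
    rw [Finset.sum_image (fun x _ y _ h => ρ.symm.injective h)]
    rw [show ∑ x ∈ A, ρ.symm x = ρ.symm (∑ x ∈ A, x) from (map_sum ρ.symm _ _).symm, hsum,
      map_zero]
  have hempty := hz _ hB hsum2
  rw [Finset.image_eq_empty] at hempty
  exact hempty

lemma pi_single_inj_aux {n : ℕ} (k k' : Fin n)
    (h : (Pi.single k (1 : ZMod 2) : Fin n → ZMod 2) = Pi.single k' 1) : k = k' := by
  by_contra hkk
  have h1 := congrFun h k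
  have h2 : Pi.single (M := fun _ : Fin n => ZMod 2) k' 1 k = 0 :=
    Pi.single_eq_of_ne hkk 1
  rw [Pi.single_eq_same, h2] at h1
  exact one_ne_zero h1

lemma pi_single_injective {n : ℕ} :
    Function.Injective (fun k : Fin n => (Pi.single k (1 : ZMod 2) : Fin n → ZMod 2)) :=
  fun k k' h => pi_single_inj_aux k k' h

lemma pi_single_ne_zero {n : ℕ} (k : Fin n) :
    Pi.single k (1 : ZMod 2) ≠ (0 : Fin n → ZMod 2) := by
  intro h
  have h1 := congrFun h k
  rw [Pi.single_eq_same] at h1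
  exact one_ne_zero h1

lemma zfree_singles {n : ℕ} :
    ZFree ((Finset.univ : Finset (Fin n)).image
      (fun k => (Pi.single k (1 : ZMod 2) : Fin n → ZMod 2))) := by
  have h := basis_image_props (Pi.basisFun (ZMod 2) (Fin n))
  have hcoe : ⇑(Pi.basisFun (ZMod 2) (Fin n))
      = fun k => (Pi.single k (1 : ZMod 2) : Fin n → ZMod 2) := by
    funext k
    simp
  rw [hcoe] at h
  exact h.2.2

/-! ### Homogeneity helpers -/

lemma isHomogeneous_of_support {n N : ℕ} {p : MvPolynomial (Fin n → ZMod 2) (ZMod 2)}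
    (h : ∀ d ∈ p.support, d.degree = N) : p.IsHomogeneous N := by
  intro d hd
  rw [show (1 : (Fin n → ZMod 2) → ℕ) = fun _ => 1 from rfl, ← Finsupp.degree_eq_weight_one]
  exact h d (MvPolynomial.mem_support_iff.mpr hd)

lemma degree_of_mem_support {n N : ℕ} {p : MvPolynomial (Fin n → ZMod 2) (ZMod 2)}
    (hp : p.IsHomogeneous N) {d : (Fin n → ZMod 2) →₀ ℕ} (hd : d ∈ p.support) :
    d.degree = N := by
  rw [Finsupp.degree_eq_weight_one]
  exact hp (MvPolynomial.mem_support_iff.mp hd)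

lemma prod_X_eq {n : ℕ} (S : Finset (Fin n → ZMod 2)) :
    (∏ v ∈ S, (X v : MvPolynomial (Fin n → ZMod 2) (ZMod 2))) = monomial (msF S) 1 := by
  classical
  induction S using Finset.induction_on with
  | empty => simp [msF]
  | insert a s hx ih =>
    rw [Finset.prod_insert hx, ih, show (X a : MvPolynomial (Fin n → ZMod 2) (ZMod 2))
      = monomial (Finsupp.single a 1) 1 from rfl, monomial_mul, one_mul]
    congr 1
    rw [msF, msF, Finset.sum_insert hx]

lemma msF_mapDomain {n : ℕ} (f : (Fin n → ZMod 2) → (Fin n → ZMod 2))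
    (hf : Function.Injective f) (T : Finset (Fin n → ZMod 2)) :
    Finsupp.mapDomain f (msF T) = msF (T.image f) := by
  classical
  rw [msF, Finsupp.mapDomain_finset_sum]
  rw [msF, Finset.sum_image (fun x _ y _ h => hf h)]
  exact Finset.sum_congr rfl fun v _ => Finsupp.mapDomain_single


/-! ### The generators belong to `L_n` -/

lemma memL_zero {n : ℕ} : MemL n 0 := by
  refine ⟨?_, ?_, ⟨?_, ?_⟩, ?_⟩
  · intro m hm; simp at hm
  · exact isHomogeneous_of_support (by intro d hd; simp at hd)
  · simp
  · intro m hm; rw [map_zero] at hm; simp at hm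
  · intro m hm; simp at hm

lemma memL_add {n : ℕ} {p q : MvPolynomial (Fin n → ZMod 2) (ZMod 2)}
    (hp : MemL n p) (hq : MemL n q) : MemL n (p + q) := by
  obtain ⟨hp1, hp2, ⟨hp3, hp4⟩, hp5⟩ := hp
  obtain ⟨hq1, hq2, ⟨hq3, hq4⟩, hq5⟩ := hq
  have hsupp := MvPolynomial.support_add (p := p) (q := q)
  refine ⟨?_, hp2.add hq2, ⟨?_, ?_⟩, ?_⟩
  · intro m hm
    rcases Finset.mem_union.mp (hsupp hm) with h | h
    exacts [hp1 m h, hq1 m h]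
  · rw [map_add, map_add, hp3, hq3, add_zero]
  · intro m hm
    rw [map_add] at hm
    rcases Finset.mem_union.mp (MvPolynomial.support_add hm) with h | h
    exacts [hp4 m h, hq4 m h]
  · intro m hm
    rcases Finset.mem_union.mp (hsupp hm) with h | h
    exacts [hp5 m h, hq5 m h]

lemma memL_smul {n : ℕ} (c : ZMod 2) {p : MvPolynomial (Fin n → ZMod 2) (ZMod 2)}
    (hp : MemL n p) : MemL n (c • p) := by
  rcases zmod2_cases c with rfl | rfl
  · rw [zero_smul]; exact memL_zero
  · rw [one_smul]; exact hp

lemma gen_memL {n : ℕ} (hn : 1 ≤ n)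
    (ρ : (Fin n → ZMod 2) ≃ₗ[ZMod 2] (Fin n → ZMod 2)) (i : ℕ)
    (h : MvPolynomial (Fin n → ZMod 2) (ZMod 2))
    (hi1 : 1 < i) (hin : i ≤ n) (hsq : IsSqFree n h) (hhom : h.IsHomogeneous (n - i))
    (hdh : dOp n h = 0)
    (hind : i < n → ∀ m ∈ h.support,
      LinearIndependent (ZMod 2)
        (fun v : {x // x ∈ m.support} =>
          (Submodule.span (ZMod 2)
              {x : Fin n → ZMod 2 | ∃ k : Fin n, (k : ℕ) < i ∧ x = Pi.single k 1}).mkQ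
            (v : Fin n → ZMod 2))) :
    MemL n (rename (⇑ρ)
      ((∏ k ∈ Finset.univ.filter (fun k : Fin n => (k : ℕ) < i),
          X (Pi.single k (1 : ZMod 2))) *
        X (∑ k ∈ Finset.univ.filter (fun k : Fin n => (k : ℕ) < i),
          Pi.single k (1 : ZMod 2)) * h)) := by
  classical
  set E : Finset (Fin n) := Finset.univ.filter (fun k : Fin n => (k : ℕ) < i) with hE
  set EV : Finset (Fin n → ZMod 2) :=
    E.image (fun k => (Pi.single k (1 : ZMod 2) : Fin n → ZMod 2)) with hEV
  set σv : Fin n → ZMod 2 := ∑ k ∈ E, (Pi.single k (1 : ZMod 2) : Fin n → ZMod 2) with hσ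
  set CE : Finset (Fin n → ZMod 2) := insert σv EV with hCE
  set U : Submodule (ZMod 2) (Fin n → ZMod 2) := Submodule.span (ZMod 2)
    {x : Fin n → ZMod 2 | ∃ k : Fin n, (k : ℕ) < i ∧ x = Pi.single k 1} with hU
  have hEcard : E.card = i := card_filter_lt i hin
  have hEVcard : EV.card = i := by
    rw [hEV, Finset.card_image_of_injective _ pi_single_injective, hEcard]
  have hEVzf : ZFree EV := fun A hA hs =>
    zfree_singles A (hA.trans (Finset.image_subset_image (Finset.subset_univ E))) hs
  have hσ_sum_EV : σv = ∑ v ∈ EV, v := by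
    rw [hEV, Finset.sum_image (fun x _ y _ hxy => pi_single_injective hxy), hσ]
  -- function values of σv
  have hσapp : ∀ j : Fin n, σv j = if j ∈ E then 1 else 0 := by
    intro j
    rw [hσ, Finset.sum_apply]
    rw [Finset.sum_congr rfl (fun c (_ : c ∈ E) => Pi.single_apply c (1 : ZMod 2) j)]
    exact Finset.sum_ite_eq E j (fun _ => (1 : ZMod 2))
  obtain ⟨k1, hk1, k2, hk2, hk12⟩ : ∃ a ∈ E, ∃ b ∈ E, a ≠ b :=
    Finset.one_lt_card.mp (by omega)
  have hσEV : σv ∉ EV := by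
    intro hmem
    obtain ⟨k', hk', heq⟩ := Finset.mem_image.mp hmem
    have e1 := congrFun heq k1
    have e2 := congrFun heq k2
    rw [hσapp k1, if_pos hk1] at e1
    rw [hσapp k2, if_pos hk2] at e2
    have hk'1 : k' = k1 := by
      by_contra hne
      rw [Pi.single_eq_of_ne (fun hh => hne hh.symm) 1] at e1
      exact one_ne_zero e1.symm
    have hk'2 : k' = k2 := by
      by_contra hne
      rw [Pi.single_eq_of_ne (fun hh => hne hh.symm) 1] at e2
      exact one_ne_zero e2.symm
    exact hk12 (hk'1 ▸ hk'2)
  have hσ0 : σv ≠ 0 := by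
    intro h0
    have := congrFun h0 k1
    rw [hσapp k1, if_pos hk1] at this
    exact one_ne_zero this
  have h0CE : (0 : Fin n → ZMod 2) ∉ CE := by
    rw [hCE, Finset.mem_insert]
    rintro (h0 | h0)
    · exact hσ0 h0.symm
    · obtain ⟨k', _, heq⟩ := Finset.mem_image.mp h0
      exact pi_single_ne_zero k' heq
  have hCEcard : CE.card = i + 1 := by
    rw [hCE, Finset.card_insert_of_notMem hσEV, hEVcard]
  have hCE_subU : ∀ v ∈ CE, v ∈ U := by
    intro v hv
    rw [hCE, Finset.mem_insert] at hv
    rcases hv with rfl | hv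
    · rw [hσ]
      refine Submodule.sum_mem _ fun k hk => Submodule.subset_span ?_
      exact ⟨k, (Finset.mem_filter.mp hk).2, rfl⟩
    · obtain ⟨k, hk, rfl⟩ := Finset.mem_image.mp hv
      exact Submodule.subset_span ⟨k, (Finset.mem_filter.mp hk).2, rfl⟩
  -- zero-sum subsets of CE
  have hzCE : ∀ D ⊆ CE, (∑ v ∈ D, v) = 0 → D = ∅ ∨ D = CE := by
    intro D hD hDsum
    by_cases hσD : σv ∈ D
    · right
      have hDe : D.erase σv ⊆ EV := by
        intro x hx
        have hx1 := Finset.mem_of_mem_erase hx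
        have hx2 := Finset.ne_of_mem_erase hx
        rcases Finset.mem_insert.mp (hD hx1) with h' | h'
        · exact absurd h' hx2
        · exact h'
      have hsum2 : σv = ∑ v ∈ D.erase σv, v := by
        have hins := Finset.add_sum_erase D id hσD
        simp only [id_eq] at hins
        exact eq_of_add_eq_zero_zmod2 (by rw [hins, hDsum])
      have heq : D.erase σv = EV :=
        zfree_eq_of_sum_eq hEVzf hDe (Finset.Subset.refl EV)
          (by rw [← hsum2, hσ_sum_EV])
      rw [← Finset.insert_erase hσD, heq, hCE]
    · left
      have hDEV : D ⊆ EV := by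
        intro x hx
        rcases Finset.mem_insert.mp (hD hx) with h' | h'
        · exact absurd (h' ▸ hx) hσD
        · exact h'
      exact hEVzf D hDEV hDsum
  -- subsets of supports of h-monomials summing into U are empty
  have hUsupp : ∀ m' ∈ h.support, ∀ A ⊆ m'.support, (∑ v ∈ A, v) ∈ U → A = ∅ := by
    intro m' hm' A hA hAU
    by_cases hii : i < n
    · exact (li_mkQ_iff U m'.support).mp (hind hii m' hm') A hA hAU
    · have hieq : n - i = 0 := by omega
      have hdeg : m'.degree = 0 := by
        have := degree_of_mem_support hhom hm'
        omega
      have : m' = 0 := (Finsupp.degree_eq_zero_iff m').mp hdeg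
      rw [this] at hA
      simpa using Finset.subset_empty.mp (by simpa using hA)
  have hdisjCE : ∀ m' ∈ h.support, Disjoint CE m'.support := by
    intro m' hm'
    rw [Finset.disjoint_left]
    intro v hvCE hvm
    have := hUsupp m' hm' {v} (Finset.singleton_subset_iff.mpr hvm)
      (by rw [Finset.sum_singleton]; exact hCE_subU v hvCE)
    simp at this
  have hsuppcard : ∀ m' ∈ h.support, (m'.support).card = n - i := by
    intro m' hm'
    have h1 : m' = msF m'.support := eq_msF_support (hsq m' hm').1
    have h2 := degree_of_mem_support hhom hm'
    rw [h1, degree_msF] at h2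
    exact h2
  have h0supp : ∀ m' ∈ h.support, (0 : Fin n → ZMod 2) ∉ m'.support := by
    intro m' hm' h0
    exact (Finsupp.mem_support_iff.mp h0) (hsq m' hm').2
  -- classification of zero-sum subsets of CE ∪ supp m' (and subsets thereof)
  have hsplitz : ∀ m' ∈ h.support, ∀ B ⊆ CE ∪ m'.support, (∑ v ∈ B, v) = 0 →
      B = ∅ ∨ B = CE := by
    intro m' hm' B hB hBsum
    have hBdecomp : B = (B ∩ CE) ∪ (B ∩ m'.support) := by
      rw [← Finset.inter_union_distrib_left]
      exact (Finset.inter_eq_left.mpr hB).symm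
    have hdisj12 : Disjoint (B ∩ CE) (B ∩ m'.support) :=
      Finset.disjoint_of_subset_left Finset.inter_subset_right
        (Finset.disjoint_of_subset_right Finset.inter_subset_right (hdisjCE m' hm'))
    have hsum12 : (∑ v ∈ B ∩ CE, v) + (∑ v ∈ B ∩ m'.support, v) = 0 := by
      rw [← Finset.sum_union hdisj12, ← hBdecomp, hBsum]
    have hsumU : (∑ v ∈ B ∩ m'.support, v) ∈ U := by
      rw [← eq_of_add_eq_zero_zmod2 hsum12]
      exact Submodule.sum_mem _ fun v hv => hCE_subU v (Finset.mem_of_mem_inter_right hv)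
    have hBm : B ∩ m'.support = ∅ :=
      hUsupp m' hm' _ Finset.inter_subset_right hsumU
    have hBCE : B = B ∩ CE := by
      conv_lhs => rw [hBdecomp]
      rw [hBm, Finset.union_empty]
    have hsum' : (∑ v ∈ B ∩ CE, v) = 0 := by rw [← hBCE]; exact hBsum
    have hres := hzCE (B ∩ CE) Finset.inter_subset_right hsum'
    rw [← hBCE] at hres
    exact hres
  -- the head monomial
  have hM : ((∏ k ∈ E, (X (Pi.single k (1 : ZMod 2)) :
        MvPolynomial (Fin n → ZMod 2) (ZMod 2))) * X σv)
      = monomial (msF CE) (1 : ZMod 2) := by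
    have h1 : (∏ k ∈ E, (X (Pi.single k (1 : ZMod 2)) :
        MvPolynomial (Fin n → ZMod 2) (ZMod 2))) = ∏ v ∈ EV, X v :=
      (Finset.prod_image (fun x _ y _ hxy => pi_single_injective hxy)).symm
    rw [h1, prod_X_eq, show (X σv : MvPolynomial (Fin n → ZMod 2) (ZMod 2))
      = monomial (Finsupp.single σv 1) 1 from rfl, monomial_mul, one_mul]
    have h2 : msF CE = Finsupp.single σv 1 + msF EV := by
      rw [hCE, msF, msF, Finset.sum_insert hσEV]
    rw [h2, add_comm]
  rw [hM]
  -- support structure of the generator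
  have hdisjEV : ∀ m' ∈ h.support, Disjoint EV m'.support := fun m' hm' =>
    Finset.disjoint_of_subset_left (hCE ▸ Finset.subset_insert σv EV) (hdisjCE m' hm')
  have hg_supp : ∀ μ ∈ (rename ⇑ρ (monomial (msF CE) (1 : ZMod 2) * h)).support,
      ∃ m' ∈ h.support, μ = msF ((CE ∪ m'.support).image ⇑ρ) := by
    intro μ hμ
    rw [support_rename_of_injective ρ.injective] at hμ
    obtain ⟨μ0, hμ0, rfl⟩ := Finset.mem_image.mp hμ
    have hμ0' := MvPolynomial.support_mul _ _ hμ0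
    obtain ⟨a, ha, b, hb, rfl⟩ := Finset.mem_add.mp hμ0'
    rw [support_monomial, if_neg one_ne_zero, Finset.mem_singleton] at ha
    subst ha
    refine ⟨b, hb, ?_⟩
    have hb' : msF CE + b = msF (CE ∪ b.support) := by
      conv_lhs => rw [show b = msF b.support from eq_msF_support (hsq b hb).1]
      exact (msF_union (hdisjCE b hb)).symm
    rw [hb', msF_mapDomain _ ρ.injective]
  have hTcard : ∀ m' ∈ h.support, ((CE ∪ m'.support).image ⇑ρ).card = n + 1 := by
    intro m' hm'
    rw [Finset.card_image_of_injective _ ρ.injective,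
      Finset.card_union_of_disjoint (hdisjCE m' hm'), hCEcard, hsuppcard m' hm']
    omega
  have h0T : ∀ m' ∈ h.support, (0 : Fin n → ZMod 2) ∉ (CE ∪ m'.support).image ⇑ρ := by
    intro m' hm' h0
    obtain ⟨v, hv, hv0⟩ := Finset.mem_image.mp h0
    have hvz : v = 0 := by
      have := ρ.map_eq_zero_iff.mp hv0
      exact this
    subst hvz
    rcases Finset.mem_union.mp hv with h' | h'
    exacts [h0CE h', h0supp m' hm' h']
  -- ZFree for EV ∪ supp m'
  have hzfEV : ∀ m' ∈ h.support, ZFree (EV ∪ m'.support) := by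
    intro m' hm' D hD hDsum
    have hD' : D ⊆ CE ∪ m'.support :=
      hD.trans (Finset.union_subset_union (hCE ▸ Finset.subset_insert σv EV)
        (Finset.Subset.refl _))
    rcases hsplitz m' hm' D hD' hDsum with h' | h'
    · exact h'
    · exfalso
      have hσD : σv ∈ D := h' ▸ (hCE ▸ Finset.mem_insert_self σv EV)
      rcases Finset.mem_union.mp (hD hσD) with h'' | h''
      · exact hσEV h''
      · exact Finset.disjoint_left.mp (hdisjCE m' hm')
          (hCE ▸ Finset.mem_insert_self σv EV) h''
  have hcardEVs : ∀ m' ∈ h.support, (EV ∪ m'.support).card = n := by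
    intro m' hm'
    rw [Finset.card_union_of_disjoint (hdisjEV m' hm'), hEVcard, hsuppcard m' hm']
    omega
  refine ⟨?_, ?_, ⟨dOp_dOp _, ?_⟩, ?_⟩
  · -- IsSqFree
    intro μ hμ
    obtain ⟨m', hm', rfl⟩ := hg_supp μ hμ
    constructor
    · intro v
      rw [msF_apply]
      by_cases hv : v ∈ (CE ∪ m'.support).image ⇑ρ <;> simp [hv]
    · rw [msF_apply, if_neg (h0T m' hm')]
  · -- homogeneous of degree n+1
    refine isHomogeneous_of_support ?_
    intro μ hμ
    obtain ⟨m', hm', rfl⟩ := hg_supp μ hμ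
    rw [degree_msF]
    exact hTcard m' hm'
  · -- monomials of d(gen) are basis monomials
    have hd_g : dOp n (rename ⇑ρ (monomial (msF CE) (1 : ZMod 2) * h))
        = rename ⇑ρ ((∑ v ∈ CE, monomial (msF (CE.erase v)) (1 : ZMod 2)) * h) := by
      rw [dOp_rename, dOp_mul, hdh, mul_zero, add_zero, dOp_sq]
    intro μ hμ
    rw [hd_g, support_rename_of_injective ρ.injective] at hμ
    obtain ⟨μ0, hμ0, rfl⟩ := Finset.mem_image.mp hμ
    have hμ0' := MvPolynomial.support_mul _ _ hμ0
    obtain ⟨a, ha, b, hb, rfl⟩ := Finset.mem_add.mp hμ0'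
    have ha' := MvPolynomial.support_sum ha
    obtain ⟨v, hvCE, hva⟩ := Finset.mem_biUnion.mp ha'
    rw [support_monomial, if_neg one_ne_zero, Finset.mem_singleton] at hva
    subst hva
    -- μ0 = msF (CE.erase v) + b
    have hdisj_e : Disjoint (CE.erase v) b.support :=
      Finset.disjoint_of_subset_left (Finset.erase_subset v CE) (hdisjCE b hb)
    have hμeq : msF (CE.erase v) + b = msF ((CE.erase v) ∪ b.support) := by
      conv_lhs => rw [show b = msF b.support from eq_msF_support (hsq b hb).1]
      exact (msF_union hdisj_e).symm
    rw [hμeq, msF_mapDomain _ ρ.injective]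
    -- ZFree of (CE.erase v) ∪ supp b
    have hzf : ZFree ((CE.erase v) ∪ b.support) := by
      intro D hD hDsum
      have hD' : D ⊆ CE ∪ b.support :=
        hD.trans (Finset.union_subset_union (Finset.erase_subset v CE)
          (Finset.Subset.refl _))
      rcases hsplitz b hb D hD' hDsum with h' | h'
      · exact h'
      · exfalso
        have hvD : v ∈ D := h' ▸ hvCE
        rcases Finset.mem_union.mp (hD hvD) with h'' | h''
        · exact Finset.ne_of_mem_erase h'' rfl
        · exact Finset.disjoint_left.mp (hdisjCE b hb) hvCE h''
    have hcard : (((CE.erase v) ∪ b.support).image ⇑ρ).card = n := by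
      rw [Finset.card_image_of_injective _ ρ.injective,
        Finset.card_union_of_disjoint hdisj_e, Finset.card_erase_of_mem hvCE,
        hCEcard, hsuppcard b hb]
      omega
    obtain ⟨bb, -, hbb⟩ := exists_basis_of_zfree (by omega) hcard
      (zfree_image_linequiv ρ hzf)
    exact ⟨bb, hbb⟩
  · -- spanning
    intro μ hμ
    obtain ⟨m', hm', rfl⟩ := hg_supp μ hμ
    rw [support_msF]
    have hcard : (((EV ∪ m'.support)).image ⇑ρ).card = n := by
      rw [Finset.card_image_of_injective _ ρ.injective, hcardEVs m' hm']
    obtain ⟨bb, hbbrange, -⟩ := exists_basis_of_zfree (by omega) hcard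
      (zfree_image_linequiv ρ (hzfEV m' hm'))
    have hspanQ : Submodule.span (ZMod 2)
        (↑((EV ∪ m'.support).image ⇑ρ) : Set (Fin n → ZMod 2)) = ⊤ := by
      rw [← hbbrange]
      exact bb.span_eq
    rw [eq_top_iff, ← hspanQ]
    refine Submodule.span_mono ?_
    refine Finset.coe_subset.mpr (Finset.image_subset_image ?_)
    exact Finset.union_subset_union (hCE ▸ Finset.subset_insert σv EV)
      (Finset.Subset.refl _)


/-! ### Elimination lemma and the forward direction -/

lemma eliminate {n : ℕ} {ι : Type*} (s : Finset ι)
    (r : ι → MvPolynomial (Fin n → ZMod 2) (ZMod 2)) (j0 : ι) (hj0 : j0 ∈ s)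
    (Pred : ((Fin n → ZMod 2) →₀ ℕ) → Prop)
    (h0 : ∀ μ ∈ (r j0).support, Pred μ)
    (h1 : ∀ j ∈ s, j ≠ j0 → ∀ μ ∈ (r j).support, ¬ Pred μ)
    (h2 : ∀ μ ∈ (∑ j ∈ s, r j).support, ¬ Pred μ) : r j0 = 0 := by
  classical
  ext μ
  rw [MvPolynomial.coeff_zero]
  by_cases hPred : Pred μ
  · have hzero : MvPolynomial.coeff μ (∑ j ∈ s, r j) = 0 := by
      by_contra hne
      exact h2 μ (MvPolynomial.mem_support_iff.mpr hne) hPred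
    rw [MvPolynomial.coeff_sum] at hzero
    rw [Finset.sum_eq_single j0 (fun j hj hne => by
        by_contra hc
        exact h1 j hj hne μ (MvPolynomial.mem_support_iff.mpr hc) hPred)
      (fun hj => absurd hj0 hj)] at hzero
    exact hzero
  · by_contra hc
    exact hPred (h0 μ (MvPolynomial.mem_support_iff.mpr hc))

lemma span_singles_eq {n : ℕ} (i : ℕ) :
    {x : Fin n → ZMod 2 | ∃ k : Fin n, (k : ℕ) < i ∧ x = Pi.single k 1}
      = ↑((Finset.univ.filter fun k : Fin n => (k : ℕ) < i).image
          (fun k => (Pi.single k (1 : ZMod 2) : Fin n → ZMod 2))) := by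
  ext x
  simp only [Set.mem_setOf_eq, Finset.coe_image, Set.mem_image, Finset.mem_coe,
    Finset.mem_filter, Finset.mem_univ, true_and]
  constructor
  · rintro ⟨k, hk, rfl⟩; exact ⟨k, hk, rfl⟩
  · rintro ⟨k, hk, rfl⟩; exact ⟨k, hk, rfl⟩

/-- membership in the span of an `F₂` finset gives a subset sum -/
lemma mem_span_finset_subset {n : ℕ} {E : Finset (Fin n → ZMod 2)} {x : Fin n → ZMod 2}
    (hx : x ∈ Submodule.span (ZMod 2) (↑E : Set (Fin n → ZMod 2))) :
    ∃ B ⊆ E, x = ∑ v ∈ B, v := by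
  classical
  obtain ⟨f, -, hf⟩ := Submodule.mem_span_finset.mp hx
  refine ⟨E.filter (fun v => f v = 1), Finset.filter_subset _ _, ?_⟩
  rw [← hf, Finset.sum_filter]
  refine Finset.sum_congr rfl fun v _ => ?_
  rcases zmod2_cases (f v) with h | h <;> simp [h]

lemma forward {n : ℕ} (hn : 1 ≤ n) {p : MvPolynomial (Fin n → ZMod 2) (ZMod 2)}
    (hp : MemL n p) :
    p ∈ Submodule.span (ZMod 2)
        {q : MvPolynomial (Fin n → ZMod 2) (ZMod 2) |
          ∃ (ρ : (Fin n → ZMod 2) ≃ₗ[ZMod 2] (Fin n → ZMod 2)) (i : ℕ)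
            (h : MvPolynomial (Fin n → ZMod 2) (ZMod 2)),
            1 < i ∧ i ≤ n ∧ h ≠ 0 ∧ IsSqFree n h ∧ h.IsHomogeneous (n - i) ∧
            dOp n h = 0 ∧
            (i < n → ∀ m ∈ h.support,
              LinearIndependent (ZMod 2)
                (fun v : {x // x ∈ m.support} =>
                  (Submodule.span (ZMod 2)
                      {x : Fin n → ZMod 2 |
                        ∃ k : Fin n, (k : ℕ) < i ∧ x = Pi.single k 1}).mkQ
                    (v : Fin n → ZMod 2))) ∧
            q = rename (⇑ρ)
              ((∏ k ∈ Finset.univ.filter (fun k : Fin n => (k : ℕ) < i),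
                  X (Pi.single k (1 : ZMod 2))) *
                X (∑ k ∈ Finset.univ.filter (fun k : Fin n => (k : ℕ) < i),
                  Pi.single k (1 : ZMod 2)) * h)} := by
  classical
  obtain ⟨hsq, hhom, ⟨hdd, hVb⟩, hspan⟩ := hp
  have hmS : ∀ m ∈ p.support, m = msF m.support := fun m hm => eq_msF_support (hsq m hm).1
  have hScard : ∀ m ∈ p.support, m.support.card = n + 1 := by
    intro m hm
    have hdeg := degree_of_mem_support hhom hm
    rw [hmS m hm, degree_msF] at hdeg
    exact hdeg
  have h0S : ∀ m ∈ p.support, (0 : Fin n → ZMod 2) ∉ m.support :=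
    fun m hm h0 => (Finsupp.mem_support_iff.mp h0) (hsq m hm).2
  have hcirc := fun m (hm : m ∈ p.support) =>
    exists_unique_circuit (h0S m hm) (hScard m hm) (hspan m hm)
  choose Cm hCm using hcirc
  set Ct : ((Fin n → ZMod 2) →₀ ℕ) → Finset (Fin n → ZMod 2) :=
    fun m => if hm : m ∈ p.support then Cm m hm else ∅ with hCt_def
  have hCt : ∀ m (hm : m ∈ p.support), Ct m = Cm m hm := fun m hm => dif_pos hm
  -- fiber facts
  have hfiber : ∀ m ∈ p.support, (Ct m) ⊆ m.support ∧ (Ct m).Nonempty ∧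
      (∑ v ∈ Ct m, v) = 0 ∧
      (∀ C' ⊆ m.support, C'.Nonempty → (∑ v ∈ C', v) = 0 → C' = Ct m) := by
    intro m hm
    rw [hCt m hm]
    obtain ⟨h1, h2, h3, h4⟩ := hCm m hm
    exact ⟨h1, h2, h3, h4⟩
  set 𝒞 : Finset (Finset (Fin n → ZMod 2)) := p.support.image Ct with h𝒞
  set F : Finset (Fin n → ZMod 2) → Finset ((Fin n → ZMod 2) →₀ ℕ) :=
    fun K => p.support.filter (fun m => Ct m = K) with hF
  set hP : Finset (Fin n → ZMod 2) → MvPolynomial (Fin n → ZMod 2) (ZMod 2) :=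
    fun K => ∑ m ∈ F K, monomial (msF (m.support \ K)) 1 with hhP
  set MK : Finset (Fin n → ZMod 2) → MvPolynomial (Fin n → ZMod 2) (ZMod 2) :=
    fun K => monomial (msF K) (1 : ZMod 2) with hMK
  have hMK_eq : ∀ K', MK K' = monomial (msF K') (1 : ZMod 2) := fun _ => rfl
  have hhP_eq : ∀ K', hP K' = ∑ m ∈ F K', monomial (msF (m.support \ K')) 1 := fun _ => rfl
  have hFm : ∀ K, ∀ m ∈ F K, m ∈ p.support ∧ Ct m = K := by
    intro K m hm
    exact Finset.mem_filter.mp hm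
  have hdecomp : p = ∑ K ∈ 𝒞, MK K * hP K := by
    conv_lhs => rw [eq_sum_support p]
    rw [← Finset.sum_fiberwise_of_maps_to (g := Ct)
      (fun m hm => Finset.mem_image_of_mem Ct hm)
      (fun m => monomial m (1 : ZMod 2))]
    refine Finset.sum_congr rfl fun K hK => ?_
    rw [hMK_eq, hhP_eq, Finset.mul_sum]
    refine Finset.sum_congr rfl fun m hm => ?_
    obtain ⟨hm1, hm2⟩ := Finset.mem_filter.mp hm
    rw [monomial_mul, one_mul]
    have hsub : K ⊆ m.support := hm2 ▸ (hfiber m hm1).1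
    conv_lhs => rw [hmS m hm1]
    rw [msF_sdiff hsub]
  -- support structure lemmas
  have hsupp_hP : ∀ K, ∀ b ∈ (hP K).support, ∃ m ∈ F K, b = msF (m.support \ K) := by
    intro K b hb
    obtain ⟨m, hm, hbm⟩ := Finset.mem_biUnion.mp (MvPolynomial.support_sum hb)
    rw [support_monomial, if_neg one_ne_zero, Finset.mem_singleton] at hbm
    exact ⟨m, hm, hbm⟩
  have hsupp_dhP : ∀ K, ∀ b ∈ (dOp n (hP K)).support,
      ∃ m ∈ F K, ∃ v ∈ m.support \ K, b = msF ((m.support \ K).erase v) := by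
    intro K b hb
    rw [hhP_eq, map_sum] at hb
    obtain ⟨m, hm, hbm⟩ := Finset.mem_biUnion.mp (MvPolynomial.support_sum hb)
    rw [dOp_sq] at hbm
    obtain ⟨v, hv, hbv⟩ := Finset.mem_biUnion.mp (MvPolynomial.support_sum hbm)
    rw [support_monomial, if_neg one_ne_zero, Finset.mem_singleton] at hbv
    exact ⟨m, hm, v, hv, hbv⟩
  -- circuits of fibers are zero-sum nonempty
  have hKprop : ∀ K ∈ 𝒞, K.Nonempty ∧ (∑ v ∈ K, v) = 0 := by
    intro K hK
    obtain ⟨m0, hm0, rfl⟩ := Finset.mem_image.mp hK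
    exact ⟨(hfiber m0 hm0).2.1, (hfiber m0 hm0).2.2.1⟩
  -- the crucial vanishing of d on the fiber polynomials
  have hdOp_hP : ∀ K ∈ 𝒞, dOp n (hP K) = 0 := by
    intro K hK
    obtain ⟨hKne, hKsum⟩ := hKprop K hK
    have helim : MK K * dOp n (hP K) = 0 := by
      refine eliminate (s := 𝒞 ×ˢ (Finset.univ : Finset Bool))
        (r := fun j => cond j.2 (MK j.1 * dOp n (hP j.1)) (dOp n (MK j.1) * hP j.1))
        ((K, true)) (Finset.mem_product.mpr ⟨hK, Finset.mem_univ _⟩)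
        (fun μ => K ⊆ μ.support) ?_ ?_ ?_
      · -- h0 : monomials of MK K * d(hP K) contain K
        intro μ hμ
        replace hμ : μ ∈ (MK K * dOp n (hP K)).support := hμ
        obtain ⟨a, ha, b, hb, rfl⟩ := Finset.mem_add.mp (MvPolynomial.support_mul _ _ hμ)
        rw [hMK_eq] at ha
        rw [support_monomial, if_neg one_ne_zero, Finset.mem_singleton] at ha
        subst ha
        intro v hv
        rw [Finsupp.mem_support_iff, Finsupp.add_apply, msF_apply, if_pos hv]
        omega
      · -- h1 : other summands avoid the predicate
        rintro ⟨K', bb⟩ hj hne μ hμ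
        rw [Finset.mem_product] at hj
        have hK' := hj.1
        intro hKμ
        cases bb with
        | false =>
          replace hμ : μ ∈ (dOp n (MK K') * hP K').support := hμ
          obtain ⟨a, ha, b, hb, rfl⟩ := Finset.mem_add.mp (MvPolynomial.support_mul _ _ hμ)
          rw [hMK_eq, dOp_sq] at ha
          obtain ⟨v, hvK', hav⟩ := Finset.mem_biUnion.mp (MvPolynomial.support_sum ha)
          rw [support_monomial, if_neg one_ne_zero, Finset.mem_singleton] at hav
          subst hav
          obtain ⟨m, hmF, hbm⟩ := hsupp_hP K' b hb
          subst hbm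
          obtain ⟨hm1, hm2⟩ := hFm K' m hmF
          have hK'sub : K' ⊆ m.support := hm2 ▸ (hfiber m hm1).1
          have hsupp_sub : (msF (K'.erase v) + msF (m.support \ K')).support
              ⊆ (K'.erase v) ∪ (m.support \ K') := by
            refine (Finsupp.support_add).trans ?_
            rw [support_msF, support_msF]
          have hKSm : K ⊆ m.support := by
            intro w hw
            rcases Finset.mem_union.mp (hsupp_sub (hKμ hw)) with h' | h'
            · exact hK'sub (Finset.mem_of_mem_erase h')
            · exact (Finset.mem_sdiff.mp h').1
          have hKeq : K = K' := by
            have hu := (hfiber m hm1).2.2.2 K hKSm hKne hKsum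
            rw [hm2] at hu
            exact hu
          have hvμ : v ∈ (msF (K'.erase v) + msF (m.support \ K')).support :=
            hKμ (by rw [hKeq]; exact hvK')
          rcases Finset.mem_union.mp (hsupp_sub hvμ) with h' | h'
          · exact Finset.ne_of_mem_erase h' rfl
          · exact (Finset.mem_sdiff.mp h').2 (hKeq ▸ hvK')
        | true =>
          replace hμ : μ ∈ (MK K' * dOp n (hP K')).support := hμ
          have hKK' : K' ≠ K := fun h => hne (by rw [h])
          obtain ⟨a, ha, b, hb, rfl⟩ := Finset.mem_add.mp (MvPolynomial.support_mul _ _ hμ)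
          rw [hMK_eq, support_monomial, if_neg one_ne_zero, Finset.mem_singleton] at ha
          subst ha
          obtain ⟨m, hmF, v, hv, hbv⟩ := hsupp_dhP K' b hb
          subst hbv
          obtain ⟨hm1, hm2⟩ := hFm K' m hmF
          have hK'sub : K' ⊆ m.support := hm2 ▸ (hfiber m hm1).1
          have hsupp_sub : (msF K' + msF ((m.support \ K').erase v)).support
              ⊆ K' ∪ ((m.support \ K').erase v) := by
            refine (Finsupp.support_add).trans ?_
            rw [support_msF, support_msF]
          have hKSm : K ⊆ m.support := by
            intro w hw
            rcases Finset.mem_union.mp (hsupp_sub (hKμ hw)) with h' | h'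
            · exact hK'sub h'
            · exact (Finset.mem_sdiff.mp (Finset.mem_of_mem_erase h')).1
          have hKeq : K = K' := by
            have hu := (hfiber m hm1).2.2.2 K hKSm hKne hKsum
            rw [hm2] at hu
            exact hu
          exact hKK' hKeq.symm
      · -- h2 : monomials of dOp p are basis monomials, no zero-sum subsets
        have hsum_eq : (∑ j ∈ 𝒞 ×ˢ (Finset.univ : Finset Bool),
            cond j.2 (MK j.1 * dOp n (hP j.1)) (dOp n (MK j.1) * hP j.1))
            = dOp n p := by
          rw [Finset.sum_product]
          rw [show (∑ K' ∈ 𝒞, ∑ bb : Bool,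
              cond bb (MK K' * dOp n (hP K')) (dOp n (MK K') * hP K'))
              = ∑ K' ∈ 𝒞, (dOp n (MK K') * hP K' + MK K' * dOp n (hP K')) from
            Finset.sum_congr rfl fun K' _ => by rw [Fintype.sum_bool]; exact add_comm _ _]
          rw [show (∑ K' ∈ 𝒞, (dOp n (MK K') * hP K' + MK K' * dOp n (hP K')))
              = ∑ K' ∈ 𝒞, dOp n (MK K' * hP K') from
            Finset.sum_congr rfl fun K' _ => (dOp_mul _ _).symm]
          rw [← map_sum, ← hdecomp]
        rw [hsum_eq]
        intro μ hμ hKμ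
        obtain ⟨b, hbμ⟩ := hVb μ hμ
        obtain ⟨hb1, hb2, hb3⟩ := basis_image_props b
        rw [hbμ, hb1, support_msF] at hKμ
        have := hb3 K hKμ hKsum
        rw [this] at hKne
        exact Finset.not_nonempty_empty hKne
    rcases mul_eq_zero.mp helim with h' | h'
    · exfalso
      rw [hMK_eq] at h'
      exact one_ne_zero (MvPolynomial.monomial_eq_zero.mp h')
    · exact h'
  -- now show each fiber polynomial is a generator
  rw [hdecomp]
  refine Submodule.sum_mem _ fun K hK => Submodule.subset_span ?_
  obtain ⟨m0, hm0, hKm0⟩ := Finset.mem_image.mp hK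
  have hm0F : m0 ∈ F K := Finset.mem_filter.mpr ⟨hm0, hKm0⟩
  have hKne : K.Nonempty := hKm0 ▸ (hfiber m0 hm0).2.1
  have hKsum : (∑ v ∈ K, v) = 0 := by rw [← hKm0]; exact (hfiber m0 hm0).2.2.1
  have hKsub0 : K ⊆ m0.support := hKm0 ▸ (hfiber m0 hm0).1
  have h0K : (0 : Fin n → ZMod 2) ∉ K := fun h0 => h0S m0 hm0 (hKsub0 h0)
  have hK3 : 3 ≤ K.card := three_le_card_circuit hKne hKsum h0K
  have hKcard_le : K.card ≤ n + 1 := (hScard m0 hm0) ▸ Finset.card_le_card hKsub0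
  set i : ℕ := K.card - 1 with hi_def
  have hi1 : 1 < i := by omega
  have hin : i ≤ n := by omega
  obtain ⟨x, hxK⟩ := hKne
  set W : Finset (Fin n → ZMod 2) := K.erase x with hW
  have hWcard : W.card = i := by rw [hW, Finset.card_erase_of_mem hxK]
  have hWsubK : W ⊆ K := hW ▸ Finset.erase_subset x K
  have hxW : x ∉ W := hW ▸ fun h => Finset.ne_of_mem_erase h rfl
  have hWzf : ZFree W := by
    intro A hA hAsum
    by_contra hAne
    have hAne' : A.Nonempty := Finset.nonempty_iff_ne_empty.mpr hAne
    have hAK : A = K := by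
      have hu := (hfiber m0 hm0).2.2.2 A ((hA.trans hWsubK).trans hKsub0) hAne' hAsum
      rw [hKm0] at hu
      exact hu
    exact hxW (hA (hAK ▸ hxK))
  obtain ⟨ρ, hρ⟩ := exists_rho W hWzf hWcard hin
  have hx_sum : x = ∑ v ∈ W, v := by
    have hins := Finset.add_sum_erase K id hxK
    simp only [id_eq] at hins
    exact eq_of_add_eq_zero_zmod2 (by rw [hins, hKsum])
  -- facts about monomials of the fiber
  have hfiber_facts : ∀ m ∈ F K, K ⊆ m.support ∧ (m.support \ K).card = n - i ∧
      (∀ C' ⊆ m.support, C'.Nonempty → (∑ v ∈ C', v) = 0 → C' = K) := by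
    intro m hm
    obtain ⟨hm1, hm2⟩ := hFm K m hm
    have hsub : K ⊆ m.support := hm2 ▸ (hfiber m hm1).1
    refine ⟨hsub, ?_, ?_⟩
    · rw [Finset.card_sdiff_of_subset hsub, hScard m hm1]
      omega
    · intro C' hC' hC'ne hC'sum
      have hu := (hfiber m hm1).2.2.2 C' hC' hC'ne hC'sum
      rw [hm2] at hu
      exact hu
  -- support of hP K
  have hinjF : Set.InjOn (fun m : (Fin n → ZMod 2) →₀ ℕ => msF (m.support \ K))
      (↑(F K) : Set ((Fin n → ZMod 2) →₀ ℕ)) := by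
    intro m hm m' hm' hEq
    rw [Finset.mem_coe] at hm hm'
    simp only at hEq
    have h1 := msF_injective hEq
    have hs : m.support = m'.support := by
      rw [← Finset.union_sdiff_of_subset (hfiber_facts m hm).1,
        ← Finset.union_sdiff_of_subset (hfiber_facts m' hm').1, h1]
    rw [hmS m (hFm K m hm).1, hmS m' (hFm K m' hm').1, hs]
  have hsupp_hPK : (hP K).support = (F K).image (fun m => msF (m.support \ K)) := by
    rw [hhP_eq]
    exact support_sum_monomials _ _ hinjF
  refine ⟨ρ, i, rename ⇑ρ.symm (hP K), hi1, hin, ?_, ?_, ?_, ?_, ?_, ?_⟩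
  · -- nonzero
    intro h0
    have h1 : hP K = 0 := by
      have hinj := MvPolynomial.rename_injective (R := ZMod 2) _ ρ.symm.injective
      apply hinj
      rw [h0, map_zero]
    have h2 : (hP K).support = ∅ := by rw [h1]; exact MvPolynomial.support_zero
    rw [hsupp_hPK, Finset.image_eq_empty] at h2
    rw [h2] at hm0F
    exact Finset.notMem_empty m0 hm0F
  · -- squarefree
    intro μ hμ
    rw [support_rename_of_injective ρ.symm.injective] at hμ
    obtain ⟨μ0, hμ0, rfl⟩ := Finset.mem_image.mp hμ
    rw [hsupp_hPK] at hμ0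
    obtain ⟨m, hm, rfl⟩ := Finset.mem_image.mp hμ0
    rw [msF_mapDomain _ ρ.symm.injective]
    constructor
    · intro v
      rw [msF_apply]
      by_cases hv : v ∈ (m.support \ K).image ⇑ρ.symm <;> simp [hv]
    · rw [msF_apply, if_neg]
      intro h0
      obtain ⟨w, hw, hw0⟩ := Finset.mem_image.mp h0
      have : w = 0 := by
        have := ρ.symm.map_eq_zero_iff.mp hw0
        exact this
      subst this
      exact h0S m (hFm K m hm).1 (Finset.mem_sdiff.mp hw).1
  · -- homogeneous of degree n - i
    refine isHomogeneous_of_support ?_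
    intro μ hμ
    rw [support_rename_of_injective ρ.symm.injective] at hμ
    obtain ⟨μ0, hμ0, rfl⟩ := Finset.mem_image.mp hμ
    rw [hsupp_hPK] at hμ0
    obtain ⟨m, hm, rfl⟩ := Finset.mem_image.mp hμ0
    rw [msF_mapDomain _ ρ.symm.injective, degree_msF,
      Finset.card_image_of_injective _ ρ.symm.injective]
    exact (hfiber_facts m hm).2.1
  · -- d h = 0
    rw [dOp_rename ρ.symm, hdOp_hP K hK, map_zero]
  · -- linear independence modulo the span
    intro hi_lt μ hμ
    rw [support_rename_of_injective ρ.symm.injective] at hμ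
    obtain ⟨μ0, hμ0, rfl⟩ := Finset.mem_image.mp hμ
    rw [hsupp_hPK] at hμ0
    obtain ⟨m, hm, rfl⟩ := Finset.mem_image.mp hμ0
    rw [msF_mapDomain _ ρ.symm.injective]
    rw [li_mkQ_iff]
    intro A hA hAU
    rw [support_msF] at hA
    rw [span_singles_eq i] at hAU
    obtain ⟨B, hB, hAB⟩ := mem_span_finset_subset hAU
    -- map everything through ρ
    set A' : Finset (Fin n → ZMod 2) := A.image ⇑ρ with hA'
    set B' : Finset (Fin n → ZMod 2) := B.image ⇑ρ with hB'
    have hA'sub : A' ⊆ m.support \ K := by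
      intro y hy
      obtain ⟨a, ha, rfl⟩ := Finset.mem_image.mp hy
      obtain ⟨w, hw, rfl⟩ := Finset.mem_image.mp (hA ha)
      rw [LinearEquiv.apply_symm_apply]
      exact hw
    have hB'sub : B' ⊆ W := by
      intro y hy
      obtain ⟨b, hb, rfl⟩ := Finset.mem_image.mp hy
      have := hB hb
      obtain ⟨k, hk, rfl⟩ := Finset.mem_image.mp this
      rw [← hρ]
      exact Finset.mem_image_of_mem _ hk
    have hdisj' : Disjoint A' B' :=
      Finset.disjoint_of_subset_left hA'sub
        (Finset.disjoint_of_subset_right (hB'sub.trans hWsubK) Finset.sdiff_disjoint)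
    have hsum' : (∑ v ∈ A' ∪ B', v) = 0 := by
      rw [Finset.sum_union hdisj', hA', hB',
        Finset.sum_image (fun u _ w _ huw => ρ.injective huw),
        Finset.sum_image (fun u _ w _ huw => ρ.injective huw),
        show (∑ u ∈ A, ρ u) = ρ (∑ u ∈ A, u) from (map_sum ρ _ _).symm,
        show (∑ u ∈ B, ρ u) = ρ (∑ u ∈ B, u) from (map_sum ρ _ _).symm,
        ← hAB, ← map_add]
      rw [add_self_zmod2, map_zero]
    have hsubm : A' ∪ B' ⊆ m.support :=
      Finset.union_subset (hA'sub.trans (Finset.sdiff_subset))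
        ((hB'sub.trans hWsubK).trans (hfiber_facts m hm).1)
    rcases Finset.eq_empty_or_nonempty (A' ∪ B') with hemp | hne'
    · have : A' = ∅ := Finset.union_eq_empty.mp hemp |>.1
      rw [hA', Finset.image_eq_empty] at this
      exact this
    · exfalso
      have hAK : A' ∪ B' = K := (hfiber_facts m hm).2.2 _ hsubm hne' hsum'
      have hxin : x ∈ A' ∪ B' := hAK ▸ hxK
      rcases Finset.mem_union.mp hxin with h' | h'
      · exact (Finset.mem_sdiff.mp (hA'sub h')).2 hxK
      · exact hxW (hB'sub h')
  · -- the generator equation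
    have hprod : (rename ⇑ρ)
        ((∏ k ∈ Finset.univ.filter (fun k : Fin n => (k : ℕ) < i),
          X (Pi.single k (1 : ZMod 2))) *
          X (∑ k ∈ Finset.univ.filter (fun k : Fin n => (k : ℕ) < i),
            Pi.single k (1 : ZMod 2)))
        = monomial (msF K) (1 : ZMod 2) := by
      rw [map_mul, MvPolynomial.rename_X]
      have hinjE : ∀ a ∈ Finset.univ.filter (fun k : Fin n => (k : ℕ) < i),
          ∀ b ∈ Finset.univ.filter (fun k : Fin n => (k : ℕ) < i),
          ρ (Pi.single a 1) = ρ (Pi.single b 1) → a = b :=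
        fun a _ b _ hab => pi_single_injective (ρ.injective hab)
      have h1 : (rename ⇑ρ) (∏ k ∈ Finset.univ.filter (fun k : Fin n => (k : ℕ) < i),
          X (Pi.single k (1 : ZMod 2)))
          = ∏ v ∈ W, (X v : MvPolynomial (Fin n → ZMod 2) (ZMod 2)) := by
        rw [map_prod]
        rw [show (∏ k ∈ Finset.univ.filter (fun k : Fin n => (k : ℕ) < i),
            (rename ⇑ρ) (X (Pi.single k (1 : ZMod 2))))
            = ∏ k ∈ Finset.univ.filter (fun k : Fin n => (k : ℕ) < i),
              X (ρ (Pi.single k (1 : ZMod 2))) from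
          Finset.prod_congr rfl fun k _ => MvPolynomial.rename_X _ _]
        rw [← Finset.prod_image (g := fun k => ρ (Pi.single k 1)) (f := X) hinjE, hρ]
      have h2 : ρ (∑ k ∈ Finset.univ.filter (fun k : Fin n => (k : ℕ) < i),
          Pi.single k (1 : ZMod 2)) = x := by
        rw [map_sum]
        have hs : ∑ v ∈ (Finset.univ.filter (fun k : Fin n => (k : ℕ) < i)).image
            (fun k => ρ (Pi.single k (1 : ZMod 2))), v
            = ∑ k ∈ Finset.univ.filter (fun k : Fin n => (k : ℕ) < i),
              ρ (Pi.single k (1 : ZMod 2)) := Finset.sum_image hinjE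
        rw [← hs, hρ, ← hx_sum]
      rw [h1, h2]
      rw [show (X x : MvPolynomial (Fin n → ZMod 2) (ZMod 2))
        = monomial (Finsupp.single x 1) 1 from rfl]
      rw [prod_X_eq, monomial_mul, one_mul]
      congr 1
      have : msF K = Finsupp.single x 1 + msF W := by
        rw [show K = insert x W from (Finset.insert_erase hxK).symm, msF, msF,
          Finset.sum_insert hxW]
      rw [this, add_comm]
    rw [map_mul, hprod]
    have hcomp : (rename ⇑ρ) ((rename ⇑ρ.symm) (hP K)) = hP K := by
      rw [MvPolynomial.rename_rename]
      rw [show (⇑ρ ∘ ⇑ρ.symm) = id from funext fun y => ρ.apply_symm_apply y]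
      exact MvPolynomial.rename_id_apply _
    rw [hcomp, hMK_eq]

end LGen

/-- `L_n` equals the span of the polynomials
`ρ(X_{e_1} ⋯ X_{e_i} · X_{e_1+⋯+e_i} · h)` with `1 < i ≤ n`, `ρ` a linear automorphism
of `V`, and `h` a nonzero squarefree homogeneous degree-`(n-i)` polynomial with
`d h = 0` whose monomials have variables that remain linearly independent in
`V / span{e_1, …, e_i}` (when `i < n`). -/
theorem L_eq_span_generators (n : ℕ) (hn : 1 ≤ n)
    (p : MvPolynomial (Fin n → ZMod 2) (ZMod 2)) :
    MemL n p ↔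
      p ∈ Submodule.span (ZMod 2)
        {q : MvPolynomial (Fin n → ZMod 2) (ZMod 2) |
          ∃ (ρ : (Fin n → ZMod 2) ≃ₗ[ZMod 2] (Fin n → ZMod 2)) (i : ℕ)
            (h : MvPolynomial (Fin n → ZMod 2) (ZMod 2)),
            1 < i ∧ i ≤ n ∧ h ≠ 0 ∧ IsSqFree n h ∧ h.IsHomogeneous (n - i) ∧
            dOp n h = 0 ∧
            (i < n → ∀ m ∈ h.support,
              LinearIndependent (ZMod 2)
                (fun v : {x // x ∈ m.support} =>
                  (Submodule.span (ZMod 2)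
                      {x : Fin n → ZMod 2 |
                        ∃ k : Fin n, (k : ℕ) < i ∧ x = Pi.single k 1}).mkQ
                    (v : Fin n → ZMod 2))) ∧
            q = rename (⇑ρ)
              ((∏ k ∈ Finset.univ.filter (fun k : Fin n => (k : ℕ) < i),
                  X (Pi.single k (1 : ZMod 2))) *
                X (∑ k ∈ Finset.univ.filter (fun k : Fin n => (k : ℕ) < i),
                  Pi.single k (1 : ZMod 2)) * h)} := by
  constructor
  · exact LGen.forward hn
  · intro hmem
    let LS : Submodule (ZMod 2) (MvPolynomial (Fin n → ZMod 2) (ZMod 2)) :=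
      { carrier := {q | MemL n q}
        add_mem' := fun hq hr => LGen.memL_add hq hr
        zero_mem' := LGen.memL_zero
        smul_mem' := fun c q hq => LGen.memL_smul c hq }
    have hle : Submodule.span (ZMod 2)
        {q : MvPolynomial (Fin n → ZMod 2) (ZMod 2) |
          ∃ (ρ : (Fin n → ZMod 2) ≃ₗ[ZMod 2] (Fin n → ZMod 2)) (i : ℕ)
            (h : MvPolynomial (Fin n → ZMod 2) (ZMod 2)),
            1 < i ∧ i ≤ n ∧ h ≠ 0 ∧ IsSqFree n h ∧ h.IsHomogeneous (n - i) ∧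
            dOp n h = 0 ∧
            (i < n → ∀ m ∈ h.support,
              LinearIndependent (ZMod 2)
                (fun v : {x // x ∈ m.support} =>
                  (Submodule.span (ZMod 2)
                      {x : Fin n → ZMod 2 |
                        ∃ k : Fin n, (k : ℕ) < i ∧ x = Pi.single k 1}).mkQ
                    (v : Fin n → ZMod 2))) ∧
            q = rename (⇑ρ)
              ((∏ k ∈ Finset.univ.filter (fun k : Fin n => (k : ℕ) < i),
                  X (Pi.single k (1 : ZMod 2))) *
                X (∑ k ∈ Finset.univ.filter (fun k : Fin n => (k : ℕ) < i),
                  Pi.single k (1 : ZMod 2)) * h)} ≤ LS := by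
      rw [Submodule.span_le]
      rintro q ⟨ρ, i, h, hi1, hin, hne, hsq, hhom, hdh, hind, rfl⟩
      exact LGen.gen_memL hn ρ i h hi1 hin hsq hhom hdh hind
    exact hle hmem
end

section
/- For n = 3, the Z/2-subspace V_3* of R = MvPolynomial ((Z/2)^3) (ZMod 2) has dimension 13 over Z/2. (By the paper's isomorphism M_3 ≅ V_3, this computes dim_{Z/2} M_3 = 13 for the group of equivariant unoriented cobordism classes of 3-dimensional 2-torus manifolds.) -/
set_option maxRecDepth 1000000
set_option maxHeartbeats 4000000
set_option synthInstance.maxSize 2000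
set_option synthInstance.maxHeartbeats 1000000


open MvPolynomial

/-- `V_n*` as a `Z/2`-subspace of `MvPolynomial ((Z/2)^n) (ZMod 2)`. -/
noncomputable def VstarSub (n : ℕ) :
    Submodule (ZMod 2) (MvPolynomial (Fin n → ZMod 2) (ZMod 2)) where
  carrier := {p | MemVstar n p}
  zero_mem' := ⟨map_zero _, by simp⟩
  add_mem' := by
    rintro a b ⟨ha1, ha2⟩ ⟨hb1, hb2⟩
    refine ⟨by rw [map_add, ha1, hb1, add_zero], fun m hm => ?_⟩
    rcases Finset.mem_union.mp (MvPolynomial.support_add hm) with h | h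
    · exact ha2 m h
    · exact hb2 m h
  smul_mem' := by
    rintro c x ⟨hx1, hx2⟩
    refine ⟨by rw [map_smul, hx1, smul_zero], fun m hm => ?_⟩
    exact hx2 m (MvPolynomial.support_smul hm)


namespace VstarAux
open MvPolynomial

abbrev V3 := Fin 3 → ZMod 2
abbrev R3 := MvPolynomial V3 (ZMod 2)

def vv : Fin 7 → V3 := ![![0,0,1],![0,1,0],![0,1,1],![1,0,0],![1,0,1],![1,1,0],![1,1,1]]

-- tris (as Fin 7 indices, 0-based): 

def triA : Fin 28 → Fin 7 := ![0,0,0,0,0,0,0,0,0,0,0,0,1,1,1,1,1,1,1,1,2,2,2,2,3,3,3,4]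

def triB : Fin 28 → Fin 7 := ![1,1,1,1,2,2,2,2,3,3,4,4,2,2,2,2,3,3,4,5,3,3,4,5,4,4,5,5]

def triC : Fin 28 → Fin 7 := ![3,4,5,6,3,4,5,6,5,6,5,6,3,4,5,6,4,6,5,6,4,5,6,6,5,6,6,6]

def prA : Fin 21 → Fin 7 := ![0,0,0,0,0,0,1,1,1,1,1,2,2,2,2,3,3,3,4,4,5]

def prB : Fin 21 → Fin 7 := ![1,2,3,4,5,6,2,3,4,5,6,3,4,5,6,4,5,6,5,6,6]

def r1 : Fin 28 → Fin 21 := ![7,8,9,10,11,12,13,14,16,17,18,19,11,12,13,14,15,17,18,20,15,16,19,20,18,19,20,20]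

def r2 : Fin 28 → Fin 21 := ![2,3,4,5,2,3,4,5,4,5,4,5,7,8,9,10,8,10,9,10,12,13,14,14,16,17,17,19]

def r3 : Fin 28 → Fin 21 := ![0,0,0,0,1,1,1,1,2,2,3,3,6,6,6,6,7,7,8,9,11,11,12,13,15,15,16,18]

def Amat : Matrix (Fin 21) (Fin 28) (ZMod 2) := ![![1,1,1,1,0,0,0,0,0,0,0,0,0,0,0,0,0,0,0,0,0,0,0,0,0,0,0,0],
  ![0,0,0,0,1,1,1,1,0,0,0,0,0,0,0,0,0,0,0,0,0,0,0,0,0,0,0,0],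
  ![1,0,0,0,1,0,0,0,1,1,0,0,0,0,0,0,0,0,0,0,0,0,0,0,0,0,0,0],
  ![0,1,0,0,0,1,0,0,0,0,1,1,0,0,0,0,0,0,0,0,0,0,0,0,0,0,0,0],
  ![0,0,1,0,0,0,1,0,1,0,1,0,0,0,0,0,0,0,0,0,0,0,0,0,0,0,0,0],
  ![0,0,0,1,0,0,0,1,0,1,0,1,0,0,0,0,0,0,0,0,0,0,0,0,0,0,0,0],
  ![0,0,0,0,0,0,0,0,0,0,0,0,1,1,1,1,0,0,0,0,0,0,0,0,0,0,0,0],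
  ![1,0,0,0,0,0,0,0,0,0,0,0,1,0,0,0,1,1,0,0,0,0,0,0,0,0,0,0],
  ![0,1,0,0,0,0,0,0,0,0,0,0,0,1,0,0,1,0,1,0,0,0,0,0,0,0,0,0],
  ![0,0,1,0,0,0,0,0,0,0,0,0,0,0,1,0,0,0,1,1,0,0,0,0,0,0,0,0],
  ![0,0,0,1,0,0,0,0,0,0,0,0,0,0,0,1,0,1,0,1,0,0,0,0,0,0,0,0],
  ![0,0,0,0,1,0,0,0,0,0,0,0,1,0,0,0,0,0,0,0,1,1,0,0,0,0,0,0],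
  ![0,0,0,0,0,1,0,0,0,0,0,0,0,1,0,0,0,0,0,0,1,0,1,0,0,0,0,0],
  ![0,0,0,0,0,0,1,0,0,0,0,0,0,0,1,0,0,0,0,0,0,1,0,1,0,0,0,0],
  ![0,0,0,0,0,0,0,1,0,0,0,0,0,0,0,1,0,0,0,0,0,0,1,1,0,0,0,0],
  ![0,0,0,0,0,0,0,0,0,0,0,0,0,0,0,0,1,0,0,0,1,0,0,0,1,1,0,0],
  ![0,0,0,0,0,0,0,0,1,0,0,0,0,0,0,0,0,0,0,0,0,1,0,0,1,0,1,0],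
  ![0,0,0,0,0,0,0,0,0,1,0,0,0,0,0,0,0,1,0,0,0,0,0,0,0,1,1,0],
  ![0,0,0,0,0,0,0,0,0,0,1,0,0,0,0,0,0,0,1,0,0,0,0,0,1,0,0,1],
  ![0,0,0,0,0,0,0,0,0,0,0,1,0,0,0,0,0,0,0,0,0,0,1,0,0,1,0,1],
  ![0,0,0,0,0,0,0,0,0,0,0,0,0,0,0,0,0,0,0,1,0,0,0,1,0,0,1,1]]

def Gmat : Matrix (Fin 28) (Fin 13) (ZMod 2) := ![![1,1,1,1,0,1,0,0,0,1,1,0,0],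
  ![1,0,0,0,1,1,0,0,0,1,1,0,0],
  ![0,1,0,0,1,0,0,0,1,0,0,1,1],
  ![0,0,1,1,0,0,0,0,1,0,0,1,1],
  ![1,1,1,0,0,1,1,0,0,0,0,0,0],
  ![1,0,0,0,0,1,0,1,0,0,0,0,0],
  ![0,1,0,0,0,0,1,0,1,0,0,0,0],
  ![0,0,1,0,0,0,0,1,1,0,0,0,0],
  ![0,0,0,0,0,0,1,0,0,1,0,1,0],
  ![0,0,0,1,0,0,0,0,0,0,1,1,0],
  ![0,0,0,0,1,0,0,0,0,1,0,0,1],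
  ![0,0,0,0,0,0,0,1,0,0,1,0,1],
  ![1,1,1,0,0,0,0,0,0,0,0,0,0],
  ![1,0,0,0,0,0,0,0,0,0,0,0,0],
  ![0,1,0,0,0,0,0,0,0,0,0,0,0],
  ![0,0,1,0,0,0,0,0,0,0,0,0,0],
  ![0,0,0,0,0,1,0,0,0,1,1,0,0],
  ![0,0,0,1,0,0,0,0,0,0,0,0,0],
  ![0,0,0,0,1,0,0,0,0,0,0,0,0],
  ![0,0,0,0,0,0,0,0,1,0,0,1,1],
  ![0,0,0,0,0,1,0,0,0,0,0,0,0],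
  ![0,0,0,0,0,0,1,0,0,0,0,0,0],
  ![0,0,0,0,0,0,0,1,0,0,0,0,0],
  ![0,0,0,0,0,0,0,0,1,0,0,0,0],
  ![0,0,0,0,0,0,0,0,0,1,0,0,0],
  ![0,0,0,0,0,0,0,0,0,0,1,0,0],
  ![0,0,0,0,0,0,0,0,0,0,0,1,0],
  ![0,0,0,0,0,0,0,0,0,0,0,0,1]]

def Pmat : Matrix (Fin 13) (Fin 28) (ZMod 2) := ![![0,0,0,0,0,0,0,0,0,0,0,0,0,1,0,0,0,0,0,0,0,0,0,0,0,0,0,0],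
  ![0,0,0,0,0,0,0,0,0,0,0,0,0,0,1,0,0,0,0,0,0,0,0,0,0,0,0,0],
  ![0,0,0,0,0,0,0,0,0,0,0,0,0,0,0,1,0,0,0,0,0,0,0,0,0,0,0,0],
  ![0,0,0,0,0,0,0,0,0,0,0,0,0,0,0,0,0,1,0,0,0,0,0,0,0,0,0,0],
  ![0,0,0,0,0,0,0,0,0,0,0,0,0,0,0,0,0,0,1,0,0,0,0,0,0,0,0,0],
  ![0,0,0,0,0,0,0,0,0,0,0,0,0,0,0,0,0,0,0,0,1,0,0,0,0,0,0,0],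
  ![0,0,0,0,0,0,0,0,0,0,0,0,0,0,0,0,0,0,0,0,0,1,0,0,0,0,0,0],
  ![0,0,0,0,0,0,0,0,0,0,0,0,0,0,0,0,0,0,0,0,0,0,1,0,0,0,0,0],
  ![0,0,0,0,0,0,0,0,0,0,0,0,0,0,0,0,0,0,0,0,0,0,0,1,0,0,0,0],
  ![0,0,0,0,0,0,0,0,0,0,0,0,0,0,0,0,0,0,0,0,0,0,0,0,1,0,0,0],
  ![0,0,0,0,0,0,0,0,0,0,0,0,0,0,0,0,0,0,0,0,0,0,0,0,0,1,0,0],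
  ![0,0,0,0,0,0,0,0,0,0,0,0,0,0,0,0,0,0,0,0,0,0,0,0,0,0,1,0],
  ![0,0,0,0,0,0,0,0,0,0,0,0,0,0,0,0,0,0,0,0,0,0,0,0,0,0,0,1]]

def L1mat : Matrix (Fin 28) (Fin 21) (ZMod 2) := ![![0,0,0,0,0,0,1,1,0,0,0,0,0,0,0,1,0,0,0,0,0],
  ![0,0,0,0,0,0,0,0,1,0,0,0,0,0,0,1,0,0,0,0,0],
  ![0,0,0,0,1,0,0,0,0,0,0,0,0,1,0,0,1,0,1,0,0],
  ![1,0,0,0,1,0,1,1,1,0,0,0,0,1,0,0,1,0,1,0,0],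
  ![0,0,0,0,0,0,1,0,0,0,0,1,0,0,0,0,0,0,0,0,0],
  ![0,0,0,0,0,0,0,0,0,0,0,0,1,0,0,0,0,0,0,0,0],
  ![0,0,0,0,0,0,0,0,0,0,0,0,0,1,0,0,0,0,0,0,0],
  ![0,1,0,0,0,0,1,0,0,0,0,1,1,1,0,0,0,0,0,0,0],
  ![0,0,0,0,0,0,0,0,0,0,0,0,0,0,0,0,1,0,0,0,0],
  ![0,0,1,0,0,0,0,1,0,0,0,1,0,0,0,1,1,0,0,0,0],
  ![0,0,0,0,0,0,0,0,0,0,0,0,0,0,0,0,0,0,1,0,0],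
  ![0,0,0,1,0,0,0,0,1,0,0,0,1,0,0,1,0,0,1,0,0],
  ![0,0,0,0,0,0,1,0,0,0,0,0,0,0,0,0,0,0,0,0,0],
  ![0,0,0,0,0,0,0,0,0,0,0,0,0,0,0,0,0,0,0,0,0],
  ![0,0,0,0,0,0,0,0,0,0,0,0,0,0,0,0,0,0,0,0,0],
  ![0,0,0,0,0,0,0,0,0,0,0,0,0,0,0,0,0,0,0,0,0],
  ![0,0,0,0,0,0,0,0,0,0,0,0,0,0,0,1,0,0,0,0,0],
  ![0,0,0,0,0,0,0,0,0,0,0,0,0,0,0,0,0,0,0,0,0],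
  ![0,0,0,0,0,0,0,0,0,0,0,0,0,0,0,0,0,0,0,0,0],
  ![0,0,0,0,1,0,0,0,0,1,0,0,0,1,0,0,1,0,1,0,0],
  ![0,0,0,0,0,0,0,0,0,0,0,0,0,0,0,0,0,0,0,0,0],
  ![0,0,0,0,0,0,0,0,0,0,0,0,0,0,0,0,0,0,0,0,0],
  ![0,0,0,0,0,0,0,0,0,0,0,0,0,0,0,0,0,0,0,0,0],
  ![0,0,0,0,0,0,0,0,0,0,0,0,0,0,0,0,0,0,0,0,0],
  ![0,0,0,0,0,0,0,0,0,0,0,0,0,0,0,0,0,0,0,0,0],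
  ![0,0,0,0,0,0,0,0,0,0,0,0,0,0,0,0,0,0,0,0,0],
  ![0,0,0,0,0,0,0,0,0,0,0,0,0,0,0,0,0,0,0,0,0],
  ![0,0,0,0,0,0,0,0,0,0,0,0,0,0,0,0,0,0,0,0,0]]

noncomputable def emon (k : Fin 28) : V3 →₀ ℕ :=
  Finsupp.single (vv (triA k)) 1 + Finsupp.single (vv (triB k)) 1 + Finsupp.single (vv (triC k)) 1
noncomputable def prm (r : Fin 21) : V3 →₀ ℕ :=
  Finsupp.single (vv (prA r)) 1 + Finsupp.single (vv (prB r)) 1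

def Efun (k : Fin 28) (a : V3) : ℕ :=
  (if vv (triA k) = a then 1 else 0) + (if vv (triB k) = a then 1 else 0) +
    (if vv (triC k) = a then 1 else 0)
def Pfun (r : Fin 21) (a : V3) : ℕ :=
  (if vv (prA r) = a then 1 else 0) + (if vv (prB r) = a then 1 else 0)

lemma emon_apply (k : Fin 28) (a : V3) : emon k a = Efun k a := by
  simp [emon, Efun, Finsupp.single_apply]
lemma prm_apply (r : Fin 21) (a : V3) : prm r a = Pfun r a := by
  simp [prm, Pfun, Finsupp.single_apply]


lemma Efun_inj : ∀ k k' : Fin 28, (∀ a : V3, Efun k a = Efun k' a) → k = k' := by decide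
lemma Pfun_inj : ∀ r r' : Fin 21, (∀ a : V3, Pfun r a = Pfun r' a) → r = r' := by decide

lemma emon_inj {k k' : Fin 28} (h : emon k = emon k') : k = k' :=
  Efun_inj k k' fun a => by rw [← emon_apply, ← emon_apply, h]
lemma prm_inj {r r' : Fin 21} (h : prm r = prm r') : r = r' :=
  Pfun_inj r r' fun a => by rw [← prm_apply, ← prm_apply, h]

lemma tri_distinct : ∀ k : Fin 28, vv (triA k) ≠ vv (triB k) ∧ vv (triA k) ≠ vv (triC k)
    ∧ vv (triB k) ≠ vv (triC k) := by decide

lemma r_pairs : ∀ k : Fin 28, prA (r1 k) = triB k ∧ prB (r1 k) = triC k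
    ∧ prA (r2 k) = triA k ∧ prB (r2 k) = triC k
    ∧ prA (r3 k) = triA k ∧ prB (r3 k) = triB k := by decide

lemma r_ne : ∀ k : Fin 28, r1 k ≠ r2 k ∧ r1 k ≠ r3 k ∧ r2 k ≠ r3 k := by decide
lemma A_zero : ∀ k : Fin 28, ∀ r : Fin 21, r ≠ r1 k → r ≠ r2 k → r ≠ r3 k → Amat r k = 0 := by
  decide
lemma A_one : ∀ k : Fin 28, Amat (r1 k) k = 1 ∧ Amat (r2 k) k = 1 ∧ Amat (r3 k) k = 1 := by decide

lemma AG_zero : Amat * Gmat = 0 := by decide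
lemma PG_one : Pmat * Gmat = 1 := by decide
lemma L1A_GP : L1mat * Amat + Gmat * Pmat = 1 := by decide

lemma sub1 {x y z : V3} (hxy : x ≠ y) (hxz : x ≠ z) :
    (Finsupp.single x 1 + Finsupp.single y 1 + Finsupp.single z 1) - Finsupp.single x 1
      = Finsupp.single y 1 + Finsupp.single z (1:ℕ) := by
  ext a
  simp only [Finsupp.tsub_apply, Finsupp.add_apply, Finsupp.single_apply]
  split_ifs <;> simp_all

lemma sub2 {x y z : V3} (hxy : x ≠ y) (hyz : y ≠ z) :
    (Finsupp.single x 1 + Finsupp.single y 1 + Finsupp.single z 1) - Finsupp.single y 1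
      = Finsupp.single x 1 + Finsupp.single z (1:ℕ) := by
  ext a
  simp only [Finsupp.tsub_apply, Finsupp.add_apply, Finsupp.single_apply]
  split_ifs <;> simp_all

lemma sub3 {x y z : V3} (hxz : x ≠ z) (hyz : y ≠ z) :
    (Finsupp.single x 1 + Finsupp.single y 1 + Finsupp.single z 1) - Finsupp.single z 1
      = Finsupp.single x 1 + Finsupp.single y (1:ℕ) := by
  ext a
  simp only [Finsupp.tsub_apply, Finsupp.add_apply, Finsupp.single_apply]
  split_ifs <;> simp_all

lemma app_zero {x y z v : V3} (hx : x ≠ v) (hy : y ≠ v) (hz : z ≠ v) :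
    ((Finsupp.single x 1 + Finsupp.single y 1 + Finsupp.single z 1 : V3 →₀ ℕ)) v = 0 := by
  simp [Finsupp.single_apply, hx, hy, hz]

lemma app1 {x y z : V3} (hxy : x ≠ y) (hxz : x ≠ z) :
    ((Finsupp.single x 1 + Finsupp.single y 1 + Finsupp.single z 1 : V3 →₀ ℕ)) x = 1 := by
  simp [Finsupp.single_apply, hxy.symm, hxz.symm]

lemma app2 {x y z : V3} (hxy : x ≠ y) (hyz : y ≠ z) :
    ((Finsupp.single x 1 + Finsupp.single y 1 + Finsupp.single z 1 : V3 →₀ ℕ)) y = 1 := by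
  simp [Finsupp.single_apply, hxy, hyz.symm]

lemma app3 {x y z : V3} (hxz : x ≠ z) (hyz : y ≠ z) :
    ((Finsupp.single x 1 + Finsupp.single y 1 + Finsupp.single z 1 : V3 →₀ ℕ)) z = 1 := by
  simp [Finsupp.single_apply, hxz, hyz]

lemma factA {x y z : V3} (hxy : x ≠ y) (hxz : x ≠ z) (hyz : y ≠ z) :
    dOp 3 (monomial (Finsupp.single x 1 + Finsupp.single y 1 + Finsupp.single z 1) 1) =
      monomial (Finsupp.single y 1 + Finsupp.single z 1) 1 +
        monomial (Finsupp.single x 1 + Finsupp.single z 1) 1 +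
        monomial (Finsupp.single x 1 + Finsupp.single y 1) 1 := by
  have hd : dOp 3 (monomial (Finsupp.single x 1 + Finsupp.single y 1 + Finsupp.single z 1) 1) =
      ∑ v : V3, pderiv v
        (monomial (Finsupp.single x 1 + Finsupp.single y 1 + Finsupp.single z 1) (1 : ZMod 2)) := by
    simp [dOp]
  rw [hd, ← Finset.sum_subset (Finset.subset_univ ({x, y, z} : Finset V3)) ?h0]
  case h0 =>
    intro v _ hv
    simp only [Finset.mem_insert, Finset.mem_singleton, not_or] at hv
    rw [pderiv_monomial, app_zero (Ne.symm hv.1) (Ne.symm hv.2.1) (Ne.symm hv.2.2)]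
    simp
  rw [Finset.sum_insert (by simp [hxy, hxz]), Finset.sum_pair hyz]
  rw [pderiv_monomial, pderiv_monomial, pderiv_monomial]
  rw [sub1 hxy hxz, sub2 hxy hyz, sub3 hxz hyz,
    app1 hxy hxz, app2 hxy hyz, app3 hxz hyz]
  norm_num [← add_assoc]

lemma col_sum (k : Fin 28) :
    ∑ r : Fin 21, monomial (prm r) (Amat r k) =
      monomial (prm (r1 k)) 1 + monomial (prm (r2 k)) 1 + monomial (prm (r3 k)) 1 := by
  have h := r_ne k
  have hA := A_one k
  rw [← Finset.sum_subset (Finset.subset_univ ({r1 k, r2 k, r3 k} : Finset (Fin 21))) ?h0]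
  case h0 =>
    intro r _ hr
    simp only [Finset.mem_insert, Finset.mem_singleton, not_or] at hr
    rw [A_zero k r hr.1 hr.2.1 hr.2.2]
    simp
  rw [Finset.sum_insert (by simp [h.1, h.2.1]), Finset.sum_pair h.2.2, hA.1, hA.2.1, hA.2.2,
    add_assoc]

lemma dOp_emon (k : Fin 28) :
    dOp 3 (monomial (emon k) 1) = ∑ r : Fin 21, monomial (prm r) (Amat r k) := by
  have hd := tri_distinct k
  have hp := r_pairs k
  rw [col_sum k, emon, factA hd.1 hd.2.1 hd.2.2, prm, prm, prm,
    hp.1, hp.2.1, hp.2.2.1, hp.2.2.2.1, hp.2.2.2.2.1, hp.2.2.2.2.2]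

noncomputable def Lm : (Fin 28 → ZMod 2) →ₗ[ZMod 2] R3 where
  toFun c := ∑ k, monomial (emon k) (c k)
  map_add' a b := by simp [map_add, Finset.sum_add_distrib]
  map_smul' m c := by
    simp only [RingHom.id_apply, Finset.smul_sum, Pi.smul_apply, smul_eq_mul, smul_monomial]

noncomputable def Lpm : (Fin 21 → ZMod 2) →ₗ[ZMod 2] R3 where
  toFun d := ∑ r, monomial (prm r) (d r)
  map_add' a b := by simp [map_add, Finset.sum_add_distrib]
  map_smul' m d := by
    simp only [RingHom.id_apply, Finset.smul_sum, Pi.smul_apply, smul_eq_mul, smul_monomial]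

noncomputable def Psi : R3 →ₗ[ZMod 2] (Fin 28 → ZMod 2) where
  toFun p k := coeff (emon k) p
  map_add' p q := by funext k; simp [coeff_add]
  map_smul' m p := by funext k; simp [coeff_smul]

lemma Lm_apply (c : Fin 28 → ZMod 2) : Lm c = ∑ k, monomial (emon k) (c k) := rfl
lemma Lpm_apply (d : Fin 21 → ZMod 2) : Lpm d = ∑ r, monomial (prm r) (d r) := rfl
lemma Psi_apply (p : R3) (k : Fin 28) : Psi p k = coeff (emon k) p := rfl

lemma dOp_Lm (c : Fin 28 → ZMod 2) : dOp 3 (Lm c) = Lpm (Amat.mulVec c) := by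
  rw [Lm_apply, Lpm_apply, map_sum]
  have step : ∀ k, dOp 3 (monomial (emon k) (c k)) =
      ∑ r, monomial (prm r) (Amat r k * c k) := by
    intro k
    have h1 : monomial (emon k) (c k) = c k • monomial (emon k) 1 := by
      rw [smul_monomial, smul_eq_mul, mul_one]
    rw [h1, map_smul, dOp_emon, Finset.smul_sum]
    refine Finset.sum_congr rfl fun r _ => ?_
    rw [smul_monomial, smul_eq_mul, mul_comm]
  rw [Finset.sum_congr rfl fun k _ => step k, Finset.sum_comm]
  refine Finset.sum_congr rfl fun r _ => ?_
  rw [← map_sum (monomial (prm r))]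
  congr 1

lemma Psi_Lm (c : Fin 28 → ZMod 2) : Psi (Lm c) = c := by
  funext k
  rw [Psi_apply, Lm_apply, coeff_sum]
  rw [Finset.sum_eq_single k (fun k' _ hk' => ?_) (by simp)]
  · rw [coeff_monomial, if_pos rfl]
  · rw [coeff_monomial, if_neg (fun h => hk' (emon_inj h))]

lemma coeff_Lpm (d : Fin 21 → ZMod 2) (r : Fin 21) : coeff (prm r) (Lpm d) = d r := by
  rw [Lpm_apply, coeff_sum]
  rw [Finset.sum_eq_single r (fun r' _ hr' => ?_) (by simp)]
  · rw [coeff_monomial, if_pos rfl]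
  · rw [coeff_monomial, if_neg (fun h => hr' (prm_inj h))]

lemma recon (p : R3) (hs : ∀ m ∈ p.support, ∃ k, m = emon k) : Lm (Psi p) = p := by
  apply MvPolynomial.ext
  intro m
  rw [Lm_apply, coeff_sum]
  by_cases h : ∃ k0, m = emon k0
  · obtain ⟨k0, rfl⟩ := h
    rw [Finset.sum_eq_single k0 (fun k' _ hk' => ?_) (by simp)]
    · rw [Psi_apply, coeff_monomial, if_pos rfl]
    · rw [coeff_monomial, if_neg (fun hh => hk' (emon_inj hh))]
  · have h0 : coeff m p = 0 := by
      by_contra hc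
      exact h (hs m (mem_support_iff.mpr hc))
    rw [h0]
    refine Finset.sum_eq_zero fun k _ => ?_
    rw [coeff_monomial, if_neg (fun hh => h ⟨k, hh.symm⟩)]

lemma support_Lm (c : Fin 28 → ZMod 2) : ∀ m ∈ (Lm c).support, ∃ k, m = emon k := by
  intro m hm
  rw [Lm_apply] at hm
  obtain ⟨k, -, hk⟩ := Finset.mem_biUnion.mp (MvPolynomial.support_sum hm)
  exact ⟨k, Finset.mem_singleton.mp (MvPolynomial.support_monomial_subset hk)⟩

lemma basis_triple : ∀ x y z : V3, x ≠ 0 → y ≠ 0 → z ≠ 0 → x + y ≠ 0 → x + z ≠ 0 → y + z ≠ 0 →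
    x + y + z ≠ 0 →
    ∃ k : Fin 28, (x = vv (triA k) ∧ y = vv (triB k) ∧ z = vv (triC k)) ∨
      (x = vv (triA k) ∧ y = vv (triC k) ∧ z = vv (triB k)) ∨
      (x = vv (triB k) ∧ y = vv (triA k) ∧ z = vv (triC k)) ∨
      (x = vv (triB k) ∧ y = vv (triC k) ∧ z = vv (triA k)) ∨
      (x = vv (triC k) ∧ y = vv (triA k) ∧ z = vv (triB k)) ∨
      (x = vv (triC k) ∧ y = vv (triB k) ∧ z = vv (triA k)) := by decide

lemma basis_mem (b : Module.Basis (Fin 3) (ZMod 2) V3) :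
    ∃ k, (∑ j : Fin 3, Finsupp.single (b j) (1:ℕ)) = emon k := by
  have hli := Fintype.linearIndependent_iff.mp b.linearIndependent
  have h : ∀ g : Fin 3 → ZMod 2, g ≠ 0 → g 0 • b 0 + g 1 • b 1 + g 2 • b 2 ≠ 0 := by
    intro g hg h0
    apply hg
    funext i
    exact hli g (by rw [Fin.sum_univ_three]; exact h0) i
  have c1 : b 0 ≠ 0 := by have := h ![1,0,0] (by decide); simpa using this
  have c2 : b 1 ≠ 0 := by have := h ![0,1,0] (by decide); simpa using this
  have c3 : b 2 ≠ 0 := by have := h ![0,0,1] (by decide); simpa using this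
  have c12 : b 0 + b 1 ≠ 0 := by have := h ![1,1,0] (by decide); simpa using this
  have c13 : b 0 + b 2 ≠ 0 := by have := h ![1,0,1] (by decide); simpa using this
  have c23 : b 1 + b 2 ≠ 0 := by have := h ![0,1,1] (by decide); simpa using this
  have c123 : b 0 + b 1 + b 2 ≠ 0 := by
    have := h ![1,1,1] (by decide); simpa [add_assoc] using this
  obtain ⟨k, hcase⟩ := basis_triple (b 0) (b 1) (b 2) c1 c2 c3 c12 c13 c23 c123
  refine ⟨k, ?_⟩
  rw [Fin.sum_univ_three, emon]
  rcases hcase with ⟨h1,h2,h3⟩|⟨h1,h2,h3⟩|⟨h1,h2,h3⟩|⟨h1,h2,h3⟩|⟨h1,h2,h3⟩|⟨h1,h2,h3⟩ <;>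
    rw [← h1, ← h2, ← h3] <;> abel

lemma emon_basis (k : Fin 28) : ∃ b : Module.Basis (Fin 3) (ZMod 2) V3,
    emon k = ∑ j : Fin 3, Finsupp.single (b j) (1:ℕ) := by
  have hli : LinearIndependent (ZMod 2) ![vv (triA k), vv (triB k), vv (triC k)] := by
    rw [Fintype.linearIndependent_iff]
    revert k; decide
  have hcard : Fintype.card (Fin 3) = Module.finrank (ZMod 2) V3 := by
    simp [Module.finrank_fin_fun]
  refine ⟨basisOfLinearIndependentOfCardEqFinrank hli hcard, ?_⟩
  have hb := coe_basisOfLinearIndependentOfCardEqFinrank hli hcard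
  rw [Fin.sum_univ_three, emon]
  rw [show basisOfLinearIndependentOfCardEqFinrank hli hcard 0 = vv (triA k) from by rw [hb]; rfl,
    show basisOfLinearIndependentOfCardEqFinrank hli hcard 1 = vv (triB k) from by rw [hb]; rfl,
    show basisOfLinearIndependentOfCardEqFinrank hli hcard 2 = vv (triC k) from by rw [hb]; rfl]

lemma mem_Vstar_Lm (c : Fin 13 → ZMod 2) : MemVstar 3 (Lm (Gmat.mulVec c)) := by
  constructor
  · rw [dOp_Lm, Matrix.mulVec_mulVec, AG_zero, Matrix.zero_mulVec, map_zero]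
  · intro m hm
    obtain ⟨k, hk⟩ := support_Lm _ m hm
    obtain ⟨b, hb⟩ := emon_basis k
    exact ⟨b, hk.trans hb⟩

lemma Amat_Psi_eq_zero (p : R3) (hd : dOp 3 p = 0) (hs : ∀ m ∈ p.support, ∃ k, m = emon k) :
    Amat.mulVec (Psi p) = 0 := by
  have h1 : Lpm (Amat.mulVec (Psi p)) = 0 := by
    rw [← dOp_Lm, recon p hs, hd]
  funext r
  rw [← coeff_Lpm (Amat.mulVec (Psi p)) r, h1]
  simp

end VstarAux

open VstarAux

/-- `dim_{Z/2} V_3* = 13`; by the isomorphism `M_3 ≅ V_3` of the paper this computes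
`dim_{Z/2} M_3 = 13`. -/
theorem finrank_Vstar_three : Module.finrank (ZMod 2) (VstarSub 3) = 13 := by
  classical
  have hmemV : ∀ c : Fin 13 → ZMod 2, (Lm ∘ₗ Gmat.mulVecLin) c ∈ VstarSub 3 := by
    intro c
    have h : (Lm ∘ₗ Gmat.mulVecLin) c = Lm (Gmat.mulVec c) := by
      rw [LinearMap.comp_apply, Matrix.mulVecLin_apply]
    rw [h]
    exact mem_Vstar_Lm c
  let E1 : (Fin 13 → ZMod 2) →ₗ[ZMod 2] VstarSub 3 :=
    LinearMap.codRestrict (VstarSub 3) (Lm ∘ₗ Gmat.mulVecLin) hmemV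
  let E2 : (VstarSub 3 : Submodule (ZMod 2) R3) →ₗ[ZMod 2] (Fin 13 → ZMod 2) :=
    Pmat.mulVecLin ∘ₗ Psi ∘ₗ (VstarSub 3).subtype
  have hE1 : ∀ c, ((E1 c : R3)) = Lm (Gmat.mulVec c) := by
    intro c
    rw [show (E1 c : R3) = (Lm ∘ₗ Gmat.mulVecLin) c from rfl,
      LinearMap.comp_apply, Matrix.mulVecLin_apply]
  have hE2 : ∀ p : VstarSub 3, E2 p = Pmat.mulVec (Psi (p : R3)) := by
    intro p
    rw [show E2 p = Pmat.mulVecLin (Psi ((VstarSub 3).subtype p)) from rfl,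
      Matrix.mulVecLin_apply, Submodule.subtype_apply]
  have h1 : E2.comp E1 = LinearMap.id := by
    apply LinearMap.ext
    intro c
    rw [LinearMap.comp_apply, LinearMap.id_apply, hE2, hE1, Psi_Lm,
      Matrix.mulVec_mulVec, PG_one, Matrix.one_mulVec]
  have h2 : E1.comp E2 = LinearMap.id := by
    apply LinearMap.ext
    intro p
    apply Subtype.ext
    rw [LinearMap.comp_apply, LinearMap.id_apply, hE1, hE2]
    have hp : MemVstar 3 (p : R3) := p.2
    have hs : ∀ m ∈ (p : R3).support, ∃ k, m = emon k := by
      intro m hm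
      obtain ⟨b, hb⟩ := hp.2 m hm
      obtain ⟨k, hk⟩ := basis_mem b
      exact ⟨k, hb.trans hk⟩
    have hker : Amat.mulVec (Psi (p : R3)) = 0 := Amat_Psi_eq_zero _ hp.1 hs
    have hGP : Gmat.mulVec (Pmat.mulVec (Psi (p : R3))) = Psi (p : R3) := by
      have h3 := congrArg (fun M => Matrix.mulVec M (Psi (p : R3))) L1A_GP
      simp only [Matrix.add_mulVec, Matrix.one_mulVec] at h3
      rw [← Matrix.mulVec_mulVec, ← Matrix.mulVec_mulVec, hker, Matrix.mulVec_zero,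
        zero_add] at h3
      exact h3
    rw [hGP, recon _ hs]
  have e : (VstarSub 3 : Submodule (ZMod 2) R3) ≃ₗ[ZMod 2] (Fin 13 → ZMod 2) :=
    LinearEquiv.ofLinear E2 E1 h1 h2
  rw [e.finrank_eq, Module.finrank_fin_fun]
end
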